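/- arXiv:2304.07268 — 4 statements merged into one kernel-verified Lean document; each statement's English description precedes it below -/
import Mathlib

section
/- (Multiplicative Chernoff bound.) Let X_1, …, X_n be independent random variables with values in {0,1}. Let X = Σ_{i=1}^n X_i, let μ = E[X], and let δ ≥ 0 be a real. Then P(X ≥ μ(1+δ)) ≤ exp(−δ²μ/(2+δ)). -/
open MeasureTheory ProbabilityTheory Real
open scoped ENNReal

/-- Derivative helper for `chernoff_log_ineq`. -/
lemma chernoff_hasDerivAt (x : ℝ) (hx : 0 < 1 + x) :
    HasDerivAt (fun y : ℝ => (2 + y) * Real.log (1 + y) - 2 * y)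
      (Real.log (1 + x) + (2 + x) * (1 / (1 + x)) - 2) x := by
  have h1 : HasDerivAt (fun y : ℝ => 1 + y) 1 x := (hasDerivAt_id x).const_add 1
  have hlog : HasDerivAt (fun y : ℝ => Real.log (1 + y)) (1 / (1 + x)) x := by
    simpa using h1.log hx.ne'
  have h2 : HasDerivAt (fun y : ℝ => 2 + y) 1 x := (hasDerivAt_id x).const_add 2
  have hmul := h2.mul hlog
  have hlin : HasDerivAt (fun y : ℝ => 2 * y) 2 x := by
    simpa using (hasDerivAt_id x).const_mul (2 : ℝ)
  exact (hmul.sub hlin).congr_deriv (by ring)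

/-- Key inequality: `2δ/(2+δ) ≤ log (1+δ)` for `δ ≥ 0`. -/
lemma chernoff_log_ineq (δ : ℝ) (hδ : 0 ≤ δ) : 2 * δ / (2 + δ) ≤ Real.log (1 + δ) := by
  have h2δ : (0 : ℝ) < 2 + δ := by linarith
  have key : 2 * δ ≤ (2 + δ) * Real.log (1 + δ) := by
    have hmono : MonotoneOn (fun y : ℝ => (2 + y) * Real.log (1 + y) - 2 * y) (Set.Ici 0) := by
      apply monotoneOn_of_deriv_nonneg (convex_Ici 0)
      · apply ContinuousOn.sub
        · apply ContinuousOn.mul (by fun_prop)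
          apply ContinuousOn.log (by fun_prop)
          intro y hy
          simp only [Set.mem_Ici] at hy
          positivity
        · fun_prop
      · intro y hy
        rw [interior_Ici] at hy
        have hy' : (0 : ℝ) < y := hy
        exact (chernoff_hasDerivAt y (by linarith)).differentiableAt.differentiableWithinAt
      · intro y hy
        rw [interior_Ici] at hy
        have hy' : (0 : ℝ) < y := hy
        have h1y : (0 : ℝ) < 1 + y := by linarith
        rw [(chernoff_hasDerivAt y h1y).deriv]
        have hlog : 1 - (1 + y)⁻¹ ≤ Real.log (1 + y) := Real.one_sub_inv_le_log_of_pos h1y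
        have : (2 + y) * (1 / (1 + y)) - 2 = -(y / (1 + y)) := by
          field_simp
          ring
        have hfrac : y / (1 + y) = 1 - (1 + y)⁻¹ := by
          field_simp
          ring
        nlinarith [hlog, hfrac, this]
    have h0 := hmono (Set.self_mem_Ici) (Set.mem_Ici.mpr hδ) hδ
    simp only [Real.log_one, add_zero, mul_zero, sub_zero, mul_zero] at h0
    simpa using h0
  rw [div_le_iff₀ h2δ]
  linarith [key]

/-- **Multiplicative Chernoff bound.** Let `X 1, …, X n` be independent random variables
with values in `{0,1}`, let `S = ∑ i, X i`, let `m = E[S]`, and let `δ ≥ 0`. Then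
`P(S ≥ m (1 + δ)) ≤ exp (-δ² m / (2 + δ))`. -/
theorem multiplicative_chernoff_bound
    {Ω : Type*} [MeasurableSpace Ω] (μ : Measure Ω) [IsProbabilityMeasure μ]
    {n : ℕ} (X : Fin n → Ω → ℝ)
    (hmeas : ∀ i, Measurable (X i))
    (hval : ∀ i ω, X i ω = 0 ∨ X i ω = 1)
    (hindep : iIndepFun X μ)
    (δ : ℝ) (hδ : 0 ≤ δ)
    (m : ℝ) (hm : m = μ[fun ω => ∑ i, X i ω]) :
    μ {ω | m * (1 + δ) ≤ ∑ i, X i ω} ≤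
      ENNReal.ofReal (Real.exp (-(δ ^ 2 * m) / (2 + δ))) := by
  have h1δ : (0 : ℝ) < 1 + δ := by linarith
  have h2δ : (0 : ℝ) < 2 + δ := by linarith
  set t := Real.log (1 + δ) with ht_def
  have ht : 0 ≤ t := Real.log_nonneg (by linarith)
  have het : Real.exp t = 1 + δ := Real.exp_log h1δ
  -- integrability of each X i
  have hXi_int : ∀ i, Integrable (X i) μ := by
    intro i
    refine (integrable_const (1 : ℝ)).mono' (hmeas i).aestronglyMeasurable ?_
    filter_upwards with ω
    rcases hval i ω with h | h <;> simp [h]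
  -- pointwise identity for exp (t * X i)
  have hpt : ∀ i, (fun ω => Real.exp (t * X i ω)) = fun ω => 1 + (Real.exp t - 1) * X i ω := by
    intro i
    funext ω
    rcases hval i ω with h | h <;> simp [h]
  have hXi_exp_int : ∀ i, Integrable (fun ω => Real.exp (t * X i ω)) μ := by
    intro i
    rw [hpt i]
    exact (integrable_const (1 : ℝ)).add ((hXi_int i).const_mul _)
  -- expectations
  set p : Fin n → ℝ := fun i => μ[X i] with hp_def
  have hp_nonneg : ∀ i, 0 ≤ p i := by
    intro i
    apply integral_nonneg
    intro ω
    rcases hval i ω with h | h <;> simp [h]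
  have hm_sum : m = ∑ i, p i := by
    rw [hm]
    rw [integral_finset_sum _ (fun i _ => hXi_int i)]
  have hm_nonneg : 0 ≤ m := hm_sum ▸ Finset.sum_nonneg fun i _ => hp_nonneg i
  -- mgf of each X i
  have hmgf_i : ∀ i, mgf (X i) μ t = 1 + (Real.exp t - 1) * p i := by
    intro i
    rw [mgf, hpt i, integral_add (integrable_const _) ((hXi_int i).const_mul _),
      integral_const, integral_const_mul]
    simp [hp_def]
  -- sum integrability and Chernoff
  have hS_int : Integrable (fun ω => Real.exp (t * (∑ i, X i) ω)) μ :=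
    hindep.integrable_exp_mul_sum hmeas (fun i _ => hXi_exp_int i)
  have hchern := measure_ge_le_exp_mul_mgf (μ := μ) (X := ∑ i, X i) (m * (1 + δ)) ht hS_int
  have hmgf_sum : mgf (∑ i, X i) μ t = ∏ i, mgf (X i) μ t :=
    hindep.mgf_sum hmeas Finset.univ
  -- bound the product of mgfs
  have hprod : ∏ i, mgf (X i) μ t ≤ Real.exp ((Real.exp t - 1) * m) := by
    calc ∏ i, mgf (X i) μ t
        ≤ ∏ i, Real.exp ((Real.exp t - 1) * p i) := by
          apply Finset.prod_le_prod
          · intro i _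
            rw [hmgf_i i]
            have h1 : 1 ≤ Real.exp t := by rw [het]; linarith
            have := hp_nonneg i
            nlinarith
          · intro i _
            rw [hmgf_i i]
            have := Real.add_one_le_exp ((Real.exp t - 1) * p i)
            linarith
      _ = Real.exp ((Real.exp t - 1) * ∑ i, p i) := by
          rw [← Real.exp_sum, Finset.mul_sum]
      _ = Real.exp ((Real.exp t - 1) * m) := by rw [hm_sum]
  -- put together
  have hreal : (μ {ω | m * (1 + δ) ≤ ∑ i, X i ω}).toReal ≤
      Real.exp (-(δ ^ 2 * m) / (2 + δ)) := by
    have hset : {ω | m * (1 + δ) ≤ ∑ i, X i ω} = {ω | m * (1 + δ) ≤ (∑ i, X i) ω} := by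
      simp [Finset.sum_apply]
    rw [hset]
    refine hchern.trans ?_
    rw [hmgf_sum]
    calc Real.exp (-t * (m * (1 + δ))) * ∏ i, mgf (X i) μ t
        ≤ Real.exp (-t * (m * (1 + δ))) * Real.exp ((Real.exp t - 1) * m) := by
          apply mul_le_mul_of_nonneg_left hprod (Real.exp_nonneg _)
      _ = Real.exp (m * (δ - (1 + δ) * t)) := by
          rw [← Real.exp_add, het]; ring_nf
      _ ≤ Real.exp (-(δ ^ 2 * m) / (2 + δ)) := by
          apply Real.exp_le_exp.mpr
          have hkey : 2 * δ / (2 + δ) ≤ t := chernoff_log_ineq δ hδ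
          have h1 : δ - (1 + δ) * t ≤ -(δ ^ 2) / (2 + δ) := by
            have h2 : (1 + δ) * (2 * δ / (2 + δ)) ≤ (1 + δ) * t :=
              mul_le_mul_of_nonneg_left hkey (by linarith)
            have h3 : δ - (1 + δ) * (2 * δ / (2 + δ)) = -(δ ^ 2) / (2 + δ) := by
              field_simp
              ring
            linarith
          calc m * (δ - (1 + δ) * t) ≤ m * (-(δ ^ 2) / (2 + δ)) :=
                mul_le_mul_of_nonneg_left h1 hm_nonneg
            _ = -(δ ^ 2 * m) / (2 + δ) := by ring
  calc μ {ω | m * (1 + δ) ≤ ∑ i, X i ω}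
      = ENNReal.ofReal (μ {ω | m * (1 + δ) ≤ ∑ i, X i ω}).toReal := by
        rw [ENNReal.ofReal_toReal (measure_ne_top μ _)]
    _ ≤ ENNReal.ofReal (Real.exp (-(δ ^ 2 * m) / (2 + δ))) := ENNReal.ofReal_le_ofReal hreal
end

section
/- Let k ≥ 1 be an integer and let X_1, X_2, … be independent random variables with values in {−1, 1} such that for every i ≥ 1, P(X_i = 1) ≤ 1/8. Let Z be the random variable defined as the minimum index i such that k + Σ_{j=1}^{i} X_j < 0. Then P(Z > 2k) ≤ exp(−k/12). -/
open MeasureTheory ProbabilityTheory Real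
open scoped ENNReal

lemma mgf_pm_one_bound {Ω : Type*} [MeasurableSpace Ω] (μ : Measure Ω) [IsProbabilityMeasure μ]
    (Y : Ω → ℝ) (hY : Measurable Y) (hval : ∀ ω, Y ω = -1 ∨ Y ω = 1)
    (hp : μ {ω | Y ω = 1} ≤ ENNReal.ofReal (1/8)) :
    mgf Y μ (Real.log (3/2)) ≤ 37/48 := by
  set t := Real.log (3/2) with ht
  have het : Real.exp t = 3/2 := Real.exp_log (by norm_num)
  have hent : Real.exp (-t) = 2/3 := by
    rw [Real.exp_neg, het]; norm_num
  have hset : MeasurableSet {ω | Y ω = 1} := hY (measurableSet_singleton 1)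
  have key : ∀ ω, Real.exp (t * Y ω) =
      2/3 + Set.indicator {ω | Y ω = 1} (fun _ => (5/6 : ℝ)) ω := by
    intro ω
    rcases hval ω with h | h
    · rw [h, Set.indicator_of_notMem (by simp [h]; norm_num)]
      rw [mul_neg_one, hent]; norm_num
    · rw [h, Set.indicator_of_mem (by simp [h])]
      rw [mul_one, het]; norm_num
  have hmgf : mgf Y μ t = 2/3 + 5/6 * (μ {ω | Y ω = 1}).toReal := by
    rw [mgf]
    simp_rw [key]
    rw [integral_add (integrable_const _)
      ((integrable_const (5/6 : ℝ)).indicator hset),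
      integral_const, integral_indicator_const _ hset]
    simp [mul_comm]
    rfl
  rw [hmgf]
  have : (μ {ω | Y ω = 1}).toReal ≤ 1/8 := by
    have := ENNReal.toReal_mono (by simp) hp
    rwa [ENNReal.toReal_ofReal (by norm_num)] at this
  linarith

/-- Let `k ≥ 1` and let `X 1, X 2, …` be independent random variables with values in
`{-1, 1}` such that `P(X i = 1) ≤ 1/8` for every `i ≥ 1`. Let `Z` be the minimum index
`i` such that `k + ∑_{j=1}^{i} X j < 0`. Then `P(Z > 2k) ≤ exp (-k/12)`; here the event
`Z > 2k` is expressed directly as "for every `1 ≤ i ≤ 2k` we have `k + ∑_{j=1}^{i} X j ≥ 0`",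
which in particular covers the case that no such index `i` exists at all. -/
theorem hit_process_bound
    {Ω : Type*} [MeasurableSpace Ω] (μ : Measure Ω) [IsProbabilityMeasure μ]
    (k : ℕ) (hk : 1 ≤ k)
    (X : ℕ → Ω → ℝ)
    (hmeas : ∀ i, Measurable (X i))
    (hval : ∀ i ω, X i ω = -1 ∨ X i ω = 1)
    (hindep : iIndepFun X μ)
    (hp : ∀ i, 1 ≤ i → μ {ω | X i ω = 1} ≤ ENNReal.ofReal (1 / 8)) :
    μ {ω | ∀ i, 1 ≤ i → i ≤ 2 * k → 0 ≤ (k : ℝ) + ∑ j ∈ Finset.Icc 1 i, X j ω} ≤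
      ENNReal.ofReal (Real.exp (-(k : ℝ) / 12)) := by
  set t := Real.log (3/2) with htdef
  have ht : 0 ≤ t := Real.log_nonneg (by norm_num)
  have het : Real.exp t = 3/2 := Real.exp_log (by norm_num)
  set s : Finset ℕ := Finset.Icc 1 (2 * k) with hs
  set S : Ω → ℝ := ∑ j ∈ s, X j with hSdef
  have hScard : s.card = 2 * k := by simp [hs]
  have hSapply : ∀ ω, S ω = ∑ j ∈ s, X j ω := fun ω => by
    rw [hSdef]; exact Finset.sum_apply ω s X
  -- event inclusion
  have hsub : {ω | ∀ i, 1 ≤ i → i ≤ 2 * k → 0 ≤ (k : ℝ) + ∑ j ∈ Finset.Icc 1 i, X j ω}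
      ⊆ {ω | -(k : ℝ) ≤ S ω} := by
    intro ω hω
    have := hω (2 * k) (by omega) le_rfl
    rw [Set.mem_setOf_eq, hSapply]
    linarith
  -- integrability of exp (t * S)
  have hSmeas : Measurable S := by
    rw [hSdef]
    exact funext_iff.2 (fun ω => Finset.sum_apply ω s X) ▸ Finset.measurable_sum s fun i _ => hmeas i
  have hSbound : ∀ ω, Real.exp (t * S ω) ≤ Real.exp (t * (2 * k)) := by
    intro ω
    apply Real.exp_le_exp.2
    apply mul_le_mul_of_nonneg_left _ ht
    rw [hSapply]
    calc ∑ j ∈ s, X j ω ≤ ∑ j ∈ s, (1 : ℝ) := by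
          apply Finset.sum_le_sum
          intro i _
          rcases hval i ω with h | h <;> rw [h] <;> norm_num
      _ = 2 * k := by rw [Finset.sum_const, hScard]; simp
  have hint : Integrable (fun ω => Real.exp (t * S ω)) μ := by
    apply Integrable.mono' (integrable_const (Real.exp (t * (2 * k))))
    · exact ((hSmeas.const_mul t).exp).aestronglyMeasurable
    · filter_upwards with ω
      rw [Real.norm_eq_abs, abs_of_pos (Real.exp_pos _)]
      exact hSbound ω
  -- Chernoff
  have chern := measure_ge_le_exp_mul_mgf (μ := μ) (X := S) (-(k : ℝ)) ht hint
  have hmgfS : mgf S μ t = ∏ i ∈ s, mgf (X i) μ t := hindep.mgf_sum hmeas s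
  have hprod : ∏ i ∈ s, mgf (X i) μ t ≤ (37/48 : ℝ) ^ (2 * k) := by
    rw [← hScard]
    calc ∏ i ∈ s, mgf (X i) μ t ≤ ∏ _i ∈ s, (37/48 : ℝ) :=
          Finset.prod_le_prod (fun i _ => mgf_nonneg)
            (fun i hi => mgf_pm_one_bound μ (X i) (hmeas i) (hval i)
              (hp i (Finset.mem_Icc.1 hi).1))
      _ = (37/48 : ℝ) ^ s.card := Finset.prod_const _
  have hmgf_nonneg : 0 ≤ ∏ i ∈ s, mgf (X i) μ t :=
    Finset.prod_nonneg fun i _ => mgf_nonneg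
  -- numeric bound
  have hnum : Real.exp (-t * -(k : ℝ)) * mgf S μ t ≤ Real.exp (-(k : ℝ) / 12) := by
    rw [hmgfS]
    have h1 : Real.exp (-t * -(k : ℝ)) = (3/2 : ℝ) ^ k := by
      rw [neg_mul_neg, mul_comm, Real.exp_nat_mul, het]
    rw [h1]
    calc (3/2 : ℝ) ^ k * ∏ i ∈ s, mgf (X i) μ t
        ≤ (3/2 : ℝ) ^ k * (37/48 : ℝ) ^ (2 * k) := by
          apply mul_le_mul_of_nonneg_left hprod (by positivity)
      _ = ((3/2 : ℝ) * (37/48)^2) ^ k := by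
          rw [mul_pow, pow_mul]
      _ ≤ ((11:ℝ)/12) ^ k := by
          apply pow_le_pow_left₀ (by positivity) (by norm_num)
      _ ≤ (Real.exp (-(1:ℝ)/12)) ^ k := by
          apply pow_le_pow_left₀ (by norm_num)
          nlinarith [Real.add_one_le_exp (-(1:ℝ)/12)]
      _ = Real.exp (-(k : ℝ) / 12) := by
          rw [← Real.exp_nat_mul]
          ring_nf
  calc μ {ω | ∀ i, 1 ≤ i → i ≤ 2 * k → 0 ≤ (k : ℝ) + ∑ j ∈ Finset.Icc 1 i, X j ω}
      ≤ μ {ω | -(k : ℝ) ≤ S ω} := measure_mono hsub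
    _ = ENNReal.ofReal (μ {ω | -(k : ℝ) ≤ S ω}).toReal := by
        rw [ENNReal.ofReal_toReal (measure_ne_top μ _)]
    _ ≤ ENNReal.ofReal (Real.exp (-t * -(k : ℝ)) * mgf S μ t) :=
        ENNReal.ofReal_le_ofReal chern
    _ ≤ ENNReal.ofReal (Real.exp (-(k : ℝ) / 12)) :=
        ENNReal.ofReal_le_ofReal hnum
end

section
/- Let n be a positive integer, let X_1, X_2, …, X_{2n} be independent random variables each with distribution Exp(1), let f_1, …, f_{2n} be measurable functions where f_i : ℝ^{i−1} → ℝ_{≥0} ∪ {+∞} for 1 ≤ i ≤ 2n and f_i ≡ 0 for n < i ≤ 2n, and let p ≥ 0 be a real. Call an index i good if X_i ≥ f_i(X_1, …, X_{i−1}), and excellent if additionally X_i > f_i(X_1, …, X_{i−1}) + p. Let N ∈ {n, n+1, …, 2n} be the number of good indices (every i > n is good almost surely), and let I_1 < I_2 < … < I_N be the consecutive good indices. For 1 ≤ i ≤ N let Y_i = X_{I_i} − f_{I_i}(X_1, …, X_{I_i−1}). Then Y_1, Y_2, …, Y_n are independent random variables, each with distribution Exp(1). Consequently, if for 1 ≤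 i ≤ n we denote by A_i the event that the index I_i is excellent, then the events A_1, …, A_n are independent and each happens with probability e^{−p}. -/
open MeasureTheory ProbabilityTheory Real
open scoped ENNReal Classical

/-- The index `i : Fin (2*n)` is *good* at the sample point `ω`:
`X i ≥ f i (X_1, …, X_{i-1})` (with values of `f` taken in `ℝ≥0 ∪ {+∞} = ℝ≥0∞`). -/
def goodIdx {Ω : Type*} {n : ℕ} (X : Fin (2 * n) → Ω → ℝ)
    (f : (i : Fin (2 * n)) → (Fin i.val → ℝ) → ℝ≥0∞) (ω : Ω) (i : Fin (2 * n)) : Prop :=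
  f i (fun j => X ⟨j.val, j.isLt.trans i.isLt⟩ ω) ≤ ENNReal.ofReal (X i ω)

/-- The index `i : Fin (2*n)` is *excellent* at `ω`: `X i > f i (X_1, …, X_{i-1}) + p`. -/
def excellentIdx {Ω : Type*} {n : ℕ} (X : Fin (2 * n) → Ω → ℝ)
    (f : (i : Fin (2 * n)) → (Fin i.val → ℝ) → ℝ≥0∞) (p : ℝ) (ω : Ω) (i : Fin (2 * n)) : Prop :=
  f i (fun j => X ⟨j.val, j.isLt.trans i.isLt⟩ ω) + ENNReal.ofReal p < ENNReal.ofReal (X i ω)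


open Set

noncomputable abbrev expM : Measure ℝ := expMeasure 1

lemma expM_apply {S : Set ℝ} (hS : MeasurableSet S) :
    expM S = ∫⁻ x in S, exponentialPDF 1 x := by
  rw [expM, expMeasure, gammaMeasure, withDensity_apply _ hS]; rfl

instance : IsProbabilityMeasure expM := isProbabilityMeasure_expMeasure one_pos

lemma expM_memoryless {t : ℝ} (ht : 0 ≤ t) {B : Set ℝ} (hB : MeasurableSet B) :
    expM {x | t ≤ x ∧ x - t ∈ B} = ENNReal.ofReal (Real.exp (-t)) * expM B := by
  have hA : MeasurableSet {x : ℝ | t ≤ x ∧ x - t ∈ B} := by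
    have : {x : ℝ | t ≤ x ∧ x - t ∈ B} = Ici t ∩ (fun x => x - t) ⁻¹' B := by
      ext x; simp [Set.mem_Ici, and_comm]
    rw [this]
    exact measurableSet_Ici.inter ((measurable_sub_const t) hB)
  rw [expM_apply hA, expM_apply hB, ← lintegral_indicator hA, ← lintegral_indicator hB,
    ← lintegral_add_right_eq_self (fun x => ({x : ℝ | t ≤ x ∧ x - t ∈ B}).indicator (exponentialPDF 1) x) t,
    ← lintegral_const_mul' _ _ ENNReal.ofReal_ne_top]
  congr 1
  funext y
  by_cases hy : 0 ≤ y ∧ y ∈ B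
  · have hmem : y + t ∈ {x : ℝ | t ≤ x ∧ x - t ∈ B} := by
      constructor
      · linarith [hy.1]
      · simpa using hy.2
    rw [Set.indicator_of_mem hmem, Set.indicator_of_mem hy.2,
      exponentialPDF_of_nonneg (by linarith [hy.1]), exponentialPDF_of_nonneg hy.1,
      ← ENNReal.ofReal_mul (exp_nonneg _)]
    congr 1
    rw [one_mul, one_mul, one_mul, ← Real.exp_add]
    ring_nf
  · rcases not_and_or.mp hy with h | h
    · have hmem : y + t ∉ {x : ℝ | t ≤ x ∧ x - t ∈ B} := by
        intro hc; exact h (by linarith [hc.1])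
      rw [Set.indicator_of_notMem hmem]
      by_cases hyB : y ∈ B
      · rw [Set.indicator_of_mem hyB, exponentialPDF_eq, if_neg (by push_neg at h ⊢; linarith), ENNReal.ofReal_zero, mul_zero]
      · rw [Set.indicator_of_notMem hyB, mul_zero]
    · have hmem : y + t ∉ {x : ℝ | t ≤ x ∧ x - t ∈ B} := by
        intro hc; exact h (by simpa using hc.2)
      rw [Set.indicator_of_notMem hmem, Set.indicator_of_notMem h, mul_zero]

lemma expM_Ici {t : ℝ} (ht : 0 ≤ t) : expM (Ici t) = ENNReal.ofReal (Real.exp (-t)) := by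
  have := expM_memoryless ht MeasurableSet.univ
  simp only [Set.mem_univ, and_true, measure_univ, mul_one] at this
  rw [← this]; rfl

lemma expM_Iio_zero : expM (Iio 0) = 0 := by
  rw [expM_apply measurableSet_Iio]
  rw [setLIntegral_congr_fun_ae measurableSet_Iio (ae_of_all _ (fun x hx => exponentialPDF_of_neg hx))]
  simp

lemma expM_singleton (t : ℝ) : expM {t} = 0 := by
  rw [expM_apply (measurableSet_singleton t)]
  exact setLIntegral_measure_zero _ _ (Real.volume_singleton)

lemma expM_Ioi {t : ℝ} (ht : 0 ≤ t) : expM (Ioi t) = ENNReal.ofReal (Real.exp (-t)) := by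
  have h1 : expM (Ici t) = expM {t} + expM (Ioi t) := by
    rw [← measure_union (by simp) measurableSet_Ioi]
    rw [← Set.Ioi_insert, Set.insert_eq]
  rw [← expM_Ici ht, h1, expM_singleton, zero_add]


noncomputable def resids : (List ℝ → ℝ≥0∞) → List ℝ → List ℝ
  | _, [] => []
  | f, x :: xs =>
    if f List.nil ≤ ENNReal.ofReal x then (x - (f List.nil).toReal) :: resids (fun l => f (x :: l)) xs
    else resids (fun l => f (x :: l)) xs

@[simp] lemma resids_nil (f : List ℝ → ℝ≥0∞) : resids f List.nil = List.nil := rfl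

lemma resids_cons (f : List ℝ → ℝ≥0∞) (x : ℝ) (xs : List ℝ) :
    resids f (x :: xs) =
      if f List.nil ≤ ENNReal.ofReal x then
        (x - (f List.nil).toReal) :: resids (fun l => f (x :: l)) xs
      else resids (fun l => f (x :: l)) xs := rfl

/-- The prefix of `v` of length `j.val`, as a list. -/
def pref {N : ℕ} (v : Fin N → ℝ) (j : Fin N) : List ℝ :=
  List.ofFn (fun i : Fin j.val => v ⟨i.val, i.isLt.trans j.isLt⟩)

lemma pref_zero {N : ℕ} (v : Fin (N+1) → ℝ) : pref v 0 = List.nil := by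
  simp [pref]

lemma pref_succ {N : ℕ} (v : Fin (N+1) → ℝ) (j : Fin N) :
    pref v j.succ = v 0 :: pref (fun i => v i.succ) j := by
  refine List.ext_getElem (by simp [pref]) ?_
  intro i h1 h2
  simp only [pref, List.getElem_ofFn] at h1 h2 ⊢
  match i with
  | 0 =>
    simp only [List.getElem_cons_zero]
    congr 1
  | (i+1) =>
    simp only [List.getElem_cons_succ, List.getElem_ofFn]
    congr 1

/-- Specification of `resids` in terms of good positions. -/
lemma resids_spec : ∀ (N : ℕ) (f : List ℝ → ℝ≥0∞) (v : Fin N → ℝ),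
    resids f (List.ofFn v) =
      (((List.finRange N).filter
        (fun j => decide (f (pref v j) ≤ ENNReal.ofReal (v j)))).map
        (fun j => v j - (f (pref v j)).toReal)) := by
  intro N
  induction N with
  | zero => intro f v; simp
  | succ N ih =>
    intro f v
    rw [List.ofFn_succ, resids_cons, List.finRange_succ, List.filter_cons,
      List.filter_map]
    have hrec : resids (fun l => f (v 0 :: l)) (List.ofFn fun i => v i.succ)
        = List.map ((fun j : Fin (N+1) => v j - (f (pref v j)).toReal) ∘ Fin.succ)
            (List.filter ((fun j : Fin (N+1) =>
              decide (f (pref v j) ≤ ENNReal.ofReal (v j))) ∘ Fin.succ) (List.finRange N)) := by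
      rw [ih (fun l => f (v 0 :: l)) (fun i => v i.succ)]
      have hfilter : ∀ j : Fin N,
          ((fun j : Fin (N+1) => decide (f (pref v j) ≤ ENNReal.ofReal (v j))) ∘ Fin.succ) j
            = (fun j : Fin N => decide ((fun l => f (v 0 :: l)) (pref (fun i => v i.succ) j)
                ≤ ENNReal.ofReal (v j.succ))) j := by
        intro j; simp only [Function.comp_apply]; rw [pref_succ]
      have heq : List.filter (fun j : Fin N =>
            decide ((fun l => f (v 0 :: l)) (pref (fun i => v i.succ) j)
              ≤ ENNReal.ofReal (v j.succ))) (List.finRange N)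
          = List.filter ((fun j : Fin (N+1) =>
              decide (f (pref v j) ≤ ENNReal.ofReal (v j))) ∘ Fin.succ) (List.finRange N) :=
        (List.filter_congr (fun j _ => (hfilter j))).symm
      rw [heq]
      apply List.map_congr_left
      intro j hj
      simp only [Function.comp_apply]
      rw [pref_succ]
    by_cases h : f List.nil ≤ ENNReal.ofReal (v 0)
    · rw [if_pos h, if_pos (by rw [pref_zero]; exact decide_eq_true h), List.map_cons, hrec,
        List.map_map]
      simp [pref_zero]
    · rw [if_neg h, if_neg (by rw [pref_zero]; simpa using h), hrec, List.map_map]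


lemma measurable_fin_cons {m : ℕ} :
    Measurable (fun p : ℝ × (Fin m → ℝ) => Fin.cons p.1 p.2 : ℝ × (Fin m → ℝ) → Fin (m+1) → ℝ) := by
  apply measurable_pi_lambda
  intro i
  refine Fin.cases ?_ ?_ i
  · simpa using measurable_fst
  · intro j
    simpa [Function.comp_def] using (measurable_pi_apply j).comp measurable_snd

/-- Joint measurability of the `i`-th residual, with a parameter. -/
lemma measurable_resids_getD :
    ∀ (m : ℕ) {α : Type} [MeasurableSpace α] (F : α → List ℝ → ℝ≥0∞)
    (_hF : ∀ j : ℕ, Measurable fun p : α × (Fin j → ℝ) => F p.1 (List.ofFn p.2)) (i : ℕ),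
    Measurable fun p : α × (Fin m → ℝ) => (resids (F p.1) (List.ofFn p.2)).getD i 0 := by
  intro m
  induction m with
  | zero =>
    intro α _ F hF i
    have : (fun p : α × (Fin 0 → ℝ) => (resids (F p.1) (List.ofFn p.2)).getD i 0)
        = fun _ => (0 : ℝ) := by
      funext p
      rw [Subsingleton.elim p.2 (fun j : Fin 0 => (0:ℝ)), List.ofFn_zero]
      simp
    rw [this]; exact measurable_const
  | succ m ih =>
    intro α _ F hF i
    set F' : (α × ℝ) → List ℝ → ℝ≥0∞ := fun q l => F q.1 (q.2 :: l) with hF'def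
    have hF' : ∀ j : ℕ, Measurable fun p : (α × ℝ) × (Fin j → ℝ) => F' p.1 (List.ofFn p.2) := by
      intro j
      have : (fun p : (α × ℝ) × (Fin j → ℝ) => F' p.1 (List.ofFn p.2))
          = (fun p : α × (Fin (j+1) → ℝ) => F p.1 (List.ofFn p.2)) ∘
            (fun p : (α × ℝ) × (Fin j → ℝ) => (p.1.1, Fin.cons p.1.2 p.2)) := by
        funext p
        simp [hF'def, List.ofFn_succ]
      rw [this]
      exact (hF (j+1)).comp ((measurable_fst.comp measurable_fst).prodMk
        (measurable_fin_cons.comp ((measurable_snd.comp measurable_fst).prodMk measurable_snd)))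
    have hc : Measurable fun p : α × (Fin (m+1) → ℝ) => F p.1 List.nil := by
      have : (fun p : α × (Fin (m+1) → ℝ) => F p.1 List.nil)
          = (fun q : α × (Fin 0 → ℝ) => F q.1 (List.ofFn q.2)) ∘
            (fun p : α × (Fin (m+1) → ℝ) => (p.1, fun j : Fin 0 => (0:ℝ))) := by
        funext p; simp [List.ofFn_zero]
      rw [this]
      exact (hF 0).comp (measurable_fst.prodMk measurable_const)
    have hx : Measurable fun p : α × (Fin (m+1) → ℝ) => p.2 0 :=
      (measurable_pi_apply 0).comp measurable_snd
    set φ : α × (Fin (m+1) → ℝ) → (α × ℝ) × (Fin m → ℝ) :=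
      fun p => ((p.1, p.2 0), Fin.tail p.2) with hφdef
    have hφ : Measurable φ := by
      apply Measurable.prodMk
      · exact measurable_fst.prodMk hx
      · exact measurable_pi_lambda _ fun j => (measurable_pi_apply j.succ).comp measurable_snd
    have hkey : ∀ p : α × (Fin (m+1) → ℝ),
        resids (F p.1) (List.ofFn p.2)
          = if F p.1 List.nil ≤ ENNReal.ofReal (p.2 0) then
              (p.2 0 - (F p.1 List.nil).toReal) :: resids (F' (φ p).1) (List.ofFn (φ p).2)
            else resids (F' (φ p).1) (List.ofFn (φ p).2) := by
      intro p
      rw [List.ofFn_succ, resids_cons]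
      rfl
    have hCset : MeasurableSet {p : α × (Fin (m+1) → ℝ) | F p.1 List.nil ≤ ENNReal.ofReal (p.2 0)} :=
      measurableSet_le hc (ENNReal.measurable_ofReal.comp hx)
    cases i with
    | zero =>
      have : (fun p : α × (Fin (m+1) → ℝ) => (resids (F p.1) (List.ofFn p.2)).getD 0 0)
          = Set.piecewise {p : α × (Fin (m+1) → ℝ) | F p.1 List.nil ≤ ENNReal.ofReal (p.2 0)}
              (fun p => p.2 0 - (F p.1 List.nil).toReal)
              (fun p => (resids (F' (φ p).1) (List.ofFn (φ p).2)).getD 0 0) := by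
        funext p
        rw [hkey p]
        by_cases h : F p.1 List.nil ≤ ENNReal.ofReal (p.2 0)
        · simp [Set.piecewise, h]
        · simp [Set.piecewise, h]
      rw [this]
      exact Measurable.piecewise hCset (hx.sub (hc.ennreal_toReal))
        ((ih F' hF' 0).comp hφ)
    | succ i' =>
      have : (fun p : α × (Fin (m+1) → ℝ) => (resids (F p.1) (List.ofFn p.2)).getD (i'+1) 0)
          = Set.piecewise {p : α × (Fin (m+1) → ℝ) | F p.1 List.nil ≤ ENNReal.ofReal (p.2 0)}
              (fun p => (resids (F' (φ p).1) (List.ofFn (φ p).2)).getD i' 0)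
              (fun p => (resids (F' (φ p).1) (List.ofFn (φ p).2)).getD (i'+1) 0) := by
        funext p
        rw [hkey p]
        by_cases h : F p.1 List.nil ≤ ENNReal.ofReal (p.2 0)
        · simp [Set.piecewise, h]
        · simp [Set.piecewise, h]
      rw [this]
      exact Measurable.piecewise hCset ((ih F' hF' i').comp hφ) ((ih F' hF' (i'+1)).comp hφ)

def keySet (m k : ℕ) (f : List ℝ → ℝ≥0∞) (B : ℕ → Set ℝ) : Set (Fin m → ℝ) :=
  {v | ∀ i, i < k → (resids f (List.ofFn v)).getD i 0 ∈ B i}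

lemma keySet_measurable (m k : ℕ) (f : List ℝ → ℝ≥0∞) (B : ℕ → Set ℝ)
    (hf : ∀ j : ℕ, Measurable fun v : Fin j → ℝ => f (List.ofFn v))
    (hB : ∀ i, MeasurableSet (B i)) : MeasurableSet (keySet m k f B) := by
  have hres : ∀ i : ℕ, Measurable fun v : Fin m → ℝ => (resids f (List.ofFn v)).getD i 0 := by
    intro i
    have h := measurable_resids_getD m (α := Unit) (fun _ => f)
      (fun j => (hf j).comp measurable_snd) i
    exact h.comp ((measurable_const : Measurable fun _ : Fin m → ℝ => ()).prodMk measurable_id)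
  have : keySet m k f B = ⋂ i ∈ Finset.range k,
      (fun v : Fin m → ℝ => (resids f (List.ofFn v)).getD i 0) ⁻¹' B i := by
    ext v; simp [keySet]
  rw [this]
  exact MeasurableSet.biInter (Finset.range k).countable_toSet
    (fun i _ => (hres i) (hB i))

lemma keySet_key : ∀ (m k : ℕ), k ≤ m → ∀ (f : List ℝ → ℝ≥0∞),
    (∀ j : ℕ, Measurable fun v : Fin j → ℝ => f (List.ofFn v)) →
    (∀ l : List ℝ, m - k ≤ l.length → f l = 0) →
    ∀ (B : ℕ → Set ℝ), (∀ i, MeasurableSet (B i)) →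
    Measure.pi (fun _ : Fin m => expM) (keySet m k f B)
      = ∏ i ∈ Finset.range k, expM (B i) := by
  intro m
  induction m with
  | zero =>
    intro k hk f hf hf0 B hB
    interval_cases k
    have : keySet 0 0 f B = Set.univ := by
      ext v; simp [keySet]
    rw [this]
    simp
  | succ m ih =>
    intro k hk f hf hf0 B hB
    match k with
    | 0 =>
      have : keySet (m+1) 0 f B = Set.univ := by
        ext v; simp [keySet]
      rw [this]
      simp
    | (k'+1) =>
      set ν := expM with hν
      set E := keySet (m+1) (k'+1) f B with hE
      have hEm : MeasurableSet E := keySet_measurable _ _ _ _ hf hB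
      set c := f List.nil with hc
      set Q' := ∏ i ∈ Finset.range k', ν (B (i+1)) with hQ'
      set Q := ∏ i ∈ Finset.range (k'+1), ν (B i) with hQ
      have hQQ' : Q = ν (B 0) * Q' := by
        rw [hQ, Finset.prod_range_succ', mul_comm]
      -- measure-preserving reduction to a product
      have hmp := measurePreserving_piFinSuccAbove (fun _ : Fin (m+1) => expM) 0
      set e := MeasurableEquiv.piFinSuccAbove (fun _ : Fin (m+1) => ℝ) 0 with he
      set S' : Set (ℝ × (Fin m → ℝ)) := e.symm ⁻¹' E with hS'
      have hS'm : MeasurableSet S' := e.symm.measurable hEm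
      have hπE : Measure.pi (fun _ : Fin (m+1) => expM) E = (ν.prod (Measure.pi fun _ : Fin m => expM)) S' := by
        rw [← (hmp.symm e).measure_preimage hEm.nullMeasurableSet]
      -- slices
      have hslice_mem : ∀ (x : ℝ) (w : Fin m → ℝ),
          ((x, w) ∈ S') ↔ (∀ i, i < k'+1 → (resids f (x :: List.ofFn w)).getD i 0 ∈ B i) := by
        intro x w
        have hes : e.symm (x, w) = Fin.cons x w := by
          show (MeasurableEquiv.piFinSuccAbove (fun _ : Fin (m+1) => ℝ) 0).symm (x, w) = _
          rw [MeasurableEquiv.piFinSuccAbove_symm_apply]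
          exact Fin.insertNth_zero' x w
        have : List.ofFn (Fin.cons x w : Fin (m+1) → ℝ) = x :: List.ofFn w := by
          rw [List.ofFn_succ, Fin.cons_zero]
          simp
        have h2 : List.ofFn (Fin.cons x w : Fin (m+1) → ℝ) = x :: List.ofFn w := this
        constructor
        · intro hmem
          have h3 : Fin.cons x w ∈ E := by rwa [← hes]
          rw [hE] at h3
          intro i hi
          have h4 := h3 i hi
          rwa [h2] at h4
        · intro hmem
          show e.symm (x, w) ∈ E
          rw [hes, hE]
          intro i hi
          rw [show List.ofFn (Fin.cons x w : Fin (m+1) → ℝ) = x :: List.ofFn w from h2]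
          exact hmem i hi
      set t := c.toReal with htdef
      set g : ℝ → ℝ≥0∞ := fun x =>
        if c ≤ ENNReal.ofReal x then (Set.indicator (B 0) (1 : ℝ → ℝ≥0∞) (x - t)) * Q'
        else Q with hg
      have hslice : ∀ x : ℝ, (Measure.pi fun _ : Fin m => expM) (Prod.mk x ⁻¹' S') = g x := by
        intro x
        set fx : List ℝ → ℝ≥0∞ := fun l => f (x :: l) with hfx
        have hfxmeas : ∀ j : ℕ, Measurable fun v : Fin j → ℝ => fx (List.ofFn v) := by
          intro j
          have heq : (fun v : Fin j → ℝ => fx (List.ofFn v))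
              = (fun v : Fin (j+1) → ℝ => f (List.ofFn v)) ∘ (fun v => Fin.cons x v) := by
            funext v; simp [hfx, List.ofFn_succ]
          rw [heq]
          exact (hf (j+1)).comp (measurable_fin_cons.comp
            ((measurable_const : Measurable fun _ : Fin j → ℝ => x).prodMk measurable_id))
        by_cases hgood : c ≤ ENNReal.ofReal x
        · have hsliceset : Prod.mk x ⁻¹' S'
              = if (x - t) ∈ B 0 then keySet m k' fx (fun i => B (i+1)) else (∅ : Set (Fin m → ℝ)) := by
            ext w
            rw [Set.mem_preimage, hslice_mem x w]
            have hres : resids f (x :: List.ofFn w)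
                = (x - t) :: resids fx (List.ofFn w) := by
              rw [resids_cons, if_pos hgood]
            rw [hres]
            by_cases hxB : (x - t) ∈ B 0
            · rw [if_pos hxB]
              constructor
              · intro h i hi
                have := h (i+1) (by omega)
                simpa using this
              · intro h i hi
                match i with
                | 0 => simpa using hxB
                | (i'+1) =>
                  have := h i' (by omega)
                  simpa using this
            · rw [if_neg hxB]
              simp only [Set.mem_empty_iff_false, iff_false]
              intro h
              exact hxB (by simpa using h 0 (Nat.succ_pos k'))
          rw [hsliceset]
          by_cases hxB : (x - t) ∈ B 0
          · rw [if_pos hxB, ih k' (by omega) fx hfxmeas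
              (fun l hl => hf0 (x :: l) (by simp; omega)) (fun i => B (i+1)) (fun i => hB (i+1))]
            simp only [hg, if_pos hgood, Set.indicator_of_mem hxB, Pi.one_apply, one_mul]
            rfl
          · rw [if_neg hxB]
            simp only [hg, if_pos hgood, Set.indicator_of_notMem hxB, zero_mul, measure_empty]
        · have hc0 : c ≠ 0 := by
            intro h0
            exact hgood (h0 ▸ zero_le)
          have hm : k' + 1 ≤ m := by
            by_contra hcon
            have hmk : m = k' := by omega
            exact hc0 (hf0 List.nil (by simp [hmk]))
          have hsliceset : Prod.mk x ⁻¹' S' = keySet m (k'+1) fx B := by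
            ext w
            rw [Set.mem_preimage, hslice_mem x w]
            have hres : resids f (x :: List.ofFn w) = resids fx (List.ofFn w) := by
              rw [resids_cons, if_neg hgood]
            rw [hres]
            rfl
          rw [hsliceset, ih (k'+1) hm fx hfxmeas
            (fun l hl => hf0 (x :: l) (by simp; omega)) B hB]
          simp only [hg, if_neg hgood]
          rfl
      rw [hπE, Measure.prod_apply hS'm, lintegral_congr hslice]
      by_cases hctop : c = ∞
      · have hgQ : ∀ x, g x = Q := by
          intro x
          have hne : ¬ c ≤ ENNReal.ofReal x := by
            intro hle
            rw [hctop] at hle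
            exact ENNReal.ofReal_ne_top (top_le_iff.mp hle)
          simp only [hg, if_neg hne]
        rw [lintegral_congr hgQ, lintegral_const, measure_univ, mul_one]
      · have ht0 : (0:ℝ) ≤ t := ENNReal.toReal_nonneg
        have hcr : c = ENNReal.ofReal t := (ENNReal.ofReal_toReal hctop).symm
        set G : Set ℝ := {x | c ≤ ENNReal.ofReal x} with hGdef
        have hGm : MeasurableSet G := measurableSet_le measurable_const ENNReal.measurable_ofReal
        have hQ'top : Q' ≠ ∞ := by
          refine (lt_of_le_of_lt (Finset.prod_le_one ?_ ?_) ENNReal.one_lt_top).ne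
          · intro i _; exact zero_le
          · intro i _; exact prob_le_one
        have hB0m : MeasurableSet ((fun y : ℝ => y - t) ⁻¹' (B 0)) := (measurable_sub_const t) (hB 0)
        have ha1 : ENNReal.ofReal (Real.exp (-t)) ≤ 1 := by
          rw [← ENNReal.ofReal_one]
          exact ENNReal.ofReal_le_ofReal (Real.exp_le_one_iff.mpr (by linarith))
        have hGIci : G =ᵐ[ν] Set.Ici t := by
          rw [Filter.eventuallyEq_set]
          filter_upwards [measure_eq_zero_iff_ae_notMem.mp expM_Iio_zero] with x hx
          have hx0 : (0:ℝ) ≤ x := by simpa [Set.mem_Iio] using hx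
          constructor
          · intro hxG
            rw [hGdef] at hxG
            have : ENNReal.ofReal t ≤ ENNReal.ofReal x := hcr ▸ hxG
            exact (ENNReal.ofReal_le_ofReal_iff hx0).mp this
          · intro hxt
            rw [hGdef]
            show c ≤ ENNReal.ofReal x
            rw [hcr]
            exact ENNReal.ofReal_le_ofReal hxt
        have hνG : ν G = ENNReal.ofReal (Real.exp (-t)) := by
          rw [measure_congr hGIci]
          exact expM_Ici ht0
        rw [← lintegral_add_compl g hGm]
        have h1 : ∫⁻ x in G, g x ∂ν
            = Q' * (ENNReal.ofReal (Real.exp (-t)) * ν (B 0)) := by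
          have hcongr : ∀ x ∈ G, g x
              = Q' * Set.indicator ((fun y : ℝ => y - t) ⁻¹' (B 0)) (1 : ℝ → ℝ≥0∞) x := by
            intro x hx
            have hx' : c ≤ ENNReal.ofReal x := hx
            simp only [hg, if_pos hx']
            rw [mul_comm]
            rfl
          rw [setLIntegral_congr_fun_ae hGm (ae_of_all _ hcongr),
            lintegral_const_mul' _ _ hQ'top]
          congr 1
          rw [lintegral_indicator_one hB0m, Measure.restrict_apply hB0m]
          rw [← expM_memoryless ht0 (hB 0), ← hν]
          apply measure_congr
          rw [Filter.eventuallyEq_set]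
          filter_upwards [measure_eq_zero_iff_ae_notMem.mp expM_Iio_zero] with x hx
          have hx0 : (0:ℝ) ≤ x := by simpa [Set.mem_Iio] using hx
          constructor
          · rintro ⟨hxB, hxG⟩
            refine ⟨?_, hxB⟩
            have : ENNReal.ofReal t ≤ ENNReal.ofReal x := hcr ▸ hxG
            exact (ENNReal.ofReal_le_ofReal_iff hx0).mp this
          · rintro ⟨hxt, hxB⟩
            refine ⟨hxB, ?_⟩
            show c ≤ ENNReal.ofReal x
            rw [hcr]
            exact ENNReal.ofReal_le_ofReal hxt
        have h3 : ∫⁻ x in Gᶜ, g x ∂ν = Q * (1 - ENNReal.ofReal (Real.exp (-t))) := by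
          have hcongr : ∀ x ∈ Gᶜ, g x = Q := by
            intro x hx
            have hx' : ¬ c ≤ ENNReal.ofReal x := hx
            simp only [hg, if_neg hx']
          rw [setLIntegral_congr_fun_ae hGm.compl (ae_of_all _ hcongr), setLIntegral_const,
            prob_compl_eq_one_sub hGm, hνG]
        rw [h1, h3, hQQ']
        set a := ENNReal.ofReal (Real.exp (-t)) with hadef
        calc Q' * (a * ν (B 0)) + ν (B 0) * Q' * (1 - a)
            = ν (B 0) * Q' * a + ν (B 0) * Q' * (1 - a) := by ring_nf
          _ = ν (B 0) * Q' * (a + (1 - a)) := by rw [mul_add]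
          _ = ν (B 0) * Q' := by
              rw [add_comm, tsub_add_cancel_of_le ha1, mul_one]

lemma card_filter_val_lt {M i : ℕ} (him : i ≤ M) :
    (Finset.univ.filter fun j : Fin M => (j : ℕ) < i).card = i := by
  apply Finset.card_eq_of_bijective (fun k hk => ⟨k, lt_of_lt_of_le hk him⟩)
  · intro a ha
    simp only [Finset.mem_filter, Finset.mem_univ, true_and] at ha
    exact ⟨a.val, ha, Fin.ext rfl⟩
  · intro k hk
    simp only [Finset.mem_filter, Finset.mem_univ, true_and]
    exact hk
  · intro k k' hk hk' h
    exact congrArg Fin.val h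

lemma sorted_filter_rank {N : ℕ} (p : Fin N → Prop) (g : Fin N → Bool)
    (hg : ∀ b, g b = true ↔ p b)
    (L : List (Fin N)) (hL : L = (List.finRange N).filter g)
    (a : Fin N) (hpa : p a) (i : ℕ)
    (hrank : (Finset.univ.filter fun b => p b ∧ b < a).card = i) :
    ∃ hi : i < L.length, L.get ⟨i, hi⟩ = a := by
  classical
  have hmemL : ∀ b : Fin N, b ∈ L ↔ p b := by
    intro b
    rw [hL, List.mem_filter, ← hg b]
    simp [List.mem_finRange]
  have hsorted : L.Pairwise (· < ·) := by
    rw [hL]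
    exact (List.pairwise_lt_finRange N).filter _
  have hnodup : L.Nodup := hsorted.imp ne_of_lt
  have hget_mono : ∀ (j j' : Fin L.length), j < j' → L.get j < L.get j' := by
    intro j j' hjj'
    exact List.pairwise_iff_get.mp hsorted j j' hjj'
  have hLfinset : L.toFinset = Finset.univ.filter fun b => p b := by
    ext b
    simp [List.mem_toFinset, hmemL b]
  have hLlen : L.length = (Finset.univ.filter fun b => p b).card := by
    rw [← hLfinset, List.card_toFinset, hnodup.dedup]
  -- the rank set is a strict subset of all p's
  have hi : i < L.length := by
    rw [hLlen, ← hrank]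
    apply Finset.card_lt_card
    constructor
    · intro b hb
      simp only [Finset.mem_filter, Finset.mem_univ, true_and] at hb ⊢
      exact hb.1
    · intro hsub
      have := hsub (Finset.mem_filter.mpr ⟨Finset.mem_univ a, hpa⟩)
      simp only [Finset.mem_filter, Finset.mem_univ, true_and] at this
      exact lt_irrefl a this.2
  refine ⟨hi, ?_⟩
  set g := L.get ⟨i, hi⟩ with hg
  -- g has rank i as well
  have hpg : p g := (hmemL g).mp (L.get_mem ⟨i, hi⟩)
  have hrankg : (Finset.univ.filter fun b => p b ∧ b < g).card = i := by
    have himage : (Finset.univ.filter fun b => p b ∧ b < g)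
        = Finset.image L.get (Finset.univ.filter fun j : Fin L.length => (j : ℕ) < i) := by
      ext b
      simp only [Finset.mem_filter, Finset.mem_univ, true_and, Finset.mem_image]
      constructor
      · rintro ⟨hpb, hblt⟩
        obtain ⟨j, hj⟩ := List.get_of_mem ((hmemL b).mpr hpb)
        refine ⟨j, ?_, hj⟩
        by_contra hcon
        push_neg at hcon
        have : g ≤ L.get j := by
          rcases eq_or_lt_of_le hcon with h | h
          · exact le_of_eq (by rw [hg]; congr 1; exact Fin.ext (by simpa using h))
          · exact le_of_lt (hget_mono _ _ (by exact Fin.mk_lt_mk.mpr h))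
        rw [hj] at this
        exact absurd hblt (not_lt.mpr this)
      · rintro ⟨j, hji, rfl⟩
        exact ⟨(hmemL _).mp (L.get_mem j), hget_mono _ _ (by exact Fin.mk_lt_mk.mpr hji)⟩
    rw [himage, Finset.card_image_of_injective _ (List.nodup_iff_injective_get.mp hnodup),
      card_filter_val_lt (le_of_lt hi)]
  -- uniqueness of rank
  by_contra hne
  rcases lt_trichotomy g a with hlt | heq | hgt
  · have : (Finset.univ.filter fun b => p b ∧ b < g) ⊂ Finset.univ.filter fun b => p b ∧ b < a := by
      constructor
      · intro b hb
        simp only [Finset.mem_filter, Finset.mem_univ, true_and] at hb ⊢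
        exact ⟨hb.1, hb.2.trans hlt⟩
      · intro hsub
        have := hsub (Finset.mem_filter.mpr ⟨Finset.mem_univ g, hpg, hlt⟩)
        simp only [Finset.mem_filter, Finset.mem_univ, true_and] at this
        exact lt_irrefl g this.2
    have := Finset.card_lt_card this
    omega
  · exact hne heq
  · have : (Finset.univ.filter fun b => p b ∧ b < a) ⊂ Finset.univ.filter fun b => p b ∧ b < g := by
      constructor
      · intro b hb
        simp only [Finset.mem_filter, Finset.mem_univ, true_and] at hb ⊢
        exact ⟨hb.1, hb.2.trans hgt⟩
      · intro hsub
        have := hsub (Finset.mem_filter.mpr ⟨Finset.mem_univ a, hpa, hgt⟩)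
        simp only [Finset.mem_filter, Finset.mem_univ, true_and] at this
        exact lt_irrefl a this.2
    have := Finset.card_lt_card this
    omega


/-- Let `X 1, …, X (2n)` be independent `Exp(1)` random variables, let
`f i : ℝ^{i-1} → ℝ≥0 ∪ {+∞}` be measurable functions with `f i ≡ 0` for the last `n`
indices, and let `p ≥ 0`. For `i < n`, let `I i` be the `(i+1)`-st good index (it exists,
since the last `n` indices are always good), and let `Y i = X (I i) - f (I i) (X_1, …)`.
Then `Y 0, …, Y (n-1)` are independent `Exp(1)` random variables; consequently the events
`A i = "I i is excellent"` are independent and each has probability `exp (-p)`. -/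
theorem consecutive_good_indices_exponential
    {Ω : Type*} [MeasurableSpace Ω] (μ : Measure Ω) [IsProbabilityMeasure μ]
    (n : ℕ) (hn : 1 ≤ n)
    (X : Fin (2 * n) → Ω → ℝ)
    (hmeas : ∀ i, Measurable (X i))
    (hindep : iIndepFun X μ)
    (hdist : ∀ i, μ.map (X i) = expMeasure 1)
    (f : (i : Fin (2 * n)) → (Fin i.val → ℝ) → ℝ≥0∞)
    (hfmeas : ∀ i, Measurable (f i))
    (hf0 : ∀ i : Fin (2 * n), n ≤ i.val → f i = 0)
    (p : ℝ) (hp : 0 ≤ p)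
    -- `I i` is the `(i+1)`-st good index: it is good, and there are exactly `i` good
    -- indices strictly smaller than it.
    (I : Fin n → Ω → Fin (2 * n))
    (hIgood : ∀ ω (i : Fin n), goodIdx X f ω (I i ω))
    (hIrank : ∀ ω (i : Fin n),
      (Finset.univ.filter fun j => goodIdx X f ω j ∧ j < I i ω).card = i.val)
    -- `Y i = X (I i) - f (I i) (X_1, …, X_{I i - 1})`.
    (Y : Fin n → Ω → ℝ)
    (hY : ∀ (i : Fin n) ω, Y i ω =
      X (I i ω) ω -
        (f (I i ω) (fun j => X ⟨j.val, j.isLt.trans (I i ω).isLt⟩ ω)).toReal) :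
    (iIndepFun Y μ ∧ ∀ i, μ.map (Y i) = expMeasure 1) ∧
      (iIndepSet (fun i : Fin n => {ω | excellentIdx X f p ω (I i ω)}) μ ∧
        ∀ i : Fin n, μ {ω | excellentIdx X f p ω (I i ω)} =
          ENNReal.ofReal (Real.exp (-p))) := by
  classical
  set F : List ℝ → ℝ≥0∞ :=
    fun l => if h : l.length < 2*n then f ⟨l.length, h⟩ (fun i => l.get i) else 0 with hFdef
  have F_eq : ∀ (l : List ℝ) (h : l.length < 2*n),
      F l = f ⟨l.length, h⟩ (fun i => l.get i) := fun l h => dif_pos h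
  have f_congr : ∀ {a b : Fin (2*n)} (_ : a = b) (u : Fin a.val → ℝ) (w : Fin b.val → ℝ),
      (∀ (q : ℕ) (h1 : q < a.val) (h2 : q < b.val), u ⟨q, h1⟩ = w ⟨q, h2⟩) → f a u = f b w := by
    intro a b hab u w huw
    subst hab
    congr 1
    funext q
    exact huw q.val q.isLt q.isLt
  have hFmeas : ∀ j : ℕ, Measurable fun v : Fin j → ℝ => F (List.ofFn v) := by
    intro j
    by_cases hj : j < 2*n
    · have heq : (fun v : Fin j → ℝ => F (List.ofFn v)) = fun v => f ⟨j, hj⟩ (fun q => v q) := by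
        funext v
        have hlen : (List.ofFn v).length = j := List.length_ofFn
        have h2 : (List.ofFn v).length < 2*n := by rw [hlen]; exact hj
        rw [F_eq _ h2]
        apply f_congr (Fin.ext (by simpa using hlen))
        intro q h1 h2'
        rw [List.get_ofFn]
        exact congrArg v (Fin.ext (by simp))
      rw [heq]
      exact hfmeas ⟨j, hj⟩
    · have heq : (fun v : Fin j → ℝ => F (List.ofFn v)) = fun _ => 0 := by
        funext v
        exact dif_neg (by rw [List.length_ofFn]; omega)
      rw [heq]
      exact measurable_const
  have hF0 : ∀ l : List ℝ, 2*n - n ≤ l.length → F l = 0 := by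
    intro l hl
    by_cases h : l.length < 2*n
    · rw [F_eq _ h, hf0 ⟨l.length, h⟩ (show n ≤ l.length by omega)]
      rfl
    · exact dif_neg h
  set V : Ω → Fin (2*n) → ℝ := fun ω j => X j ω with hVdef
  have hVmeas : Measurable V := measurable_pi_lambda _ hmeas
  haveI : IsProbabilityMeasure (expMeasure 1) := isProbabilityMeasure_expMeasure one_pos
  have hmap : μ.map V = Measure.pi (fun _ : Fin (2*n) => expM) := by
    symm
    apply Measure.pi_eq
    intro s hs
    rw [Measure.map_apply hVmeas (MeasurableSet.univ_pi hs)]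
    have hpre : V ⁻¹' (Set.univ.pi s) = ⋂ j ∈ (Finset.univ : Finset (Fin (2*n))), X j ⁻¹' s j := by
      ext ω
      simp [hVdef, Set.mem_pi]
    rw [hpre, hindep.measure_inter_preimage_eq_mul Finset.univ (fun j _ => hs j)]
    apply Finset.prod_congr rfl
    intro j _
    rw [← Measure.map_apply (hmeas j) (hs j), hdist j]
  have hFpref : ∀ (ω : Ω) (j : Fin (2*n)), F (pref (V ω) j)
      = f j (fun q => X ⟨q.val, q.isLt.trans j.isLt⟩ ω) := by
    intro ω j
    have hlen : (pref (V ω) j).length = j.val := by simp [pref]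
    have h2 : (pref (V ω) j).length < 2*n := by rw [hlen]; exact j.isLt
    refine (F_eq _ h2).trans ?_
    apply f_congr (Fin.ext (by simpa using hlen))
    intro q h1 h2'
    show (List.ofFn (fun i : Fin j.val => V ω ⟨i.val, i.isLt.trans j.isLt⟩)).get ⟨q, h1⟩
        = X ⟨q, h2'.trans j.isLt⟩ ω
    rw [List.get_ofFn]
    show X _ ω = X _ ω
    exact congrArg (fun z => X z ω) (Fin.ext (by simp))
  have hp_iff : ∀ (ω : Ω) (j : Fin (2*n)),
      (F (pref (V ω) j) ≤ ENNReal.ofReal (V ω j)) ↔ goodIdx X f ω j := by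
    intro ω j
    rw [hFpref ω j]
    exact Iff.rfl
  have hbridge : ∀ (ω : Ω) (i : Fin n),
      (resids F (List.ofFn (V ω))).getD i.val 0 = Y i ω := by
    intro ω i
    obtain ⟨hi, hget⟩ := sorted_filter_rank
      (fun j => F (pref (V ω) j) ≤ ENNReal.ofReal (V ω j))
      (fun j => decide (F (pref (V ω) j) ≤ ENNReal.ofReal (V ω j)))
      (fun b => by simp)
      ((List.finRange (2*n)).filter
        (fun j => decide (F (pref (V ω) j) ≤ ENNReal.ofReal (V ω j)))) rfl (I i ω)
      ((hp_iff ω (I i ω)).mpr (hIgood ω i)) i.val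
      (by
        have h := hIrank ω i
        rw [← h]
        congr 1
        ext b
        simp only [Finset.mem_filter, Finset.mem_univ, true_and]
        exact and_congr_left' (hp_iff ω b))
    rw [resids_spec (2*n) F (V ω)]
    have hlenmap : i.val < (((List.finRange (2*n)).filter
        (fun j => decide (F (pref (V ω) j) ≤ ENNReal.ofReal (V ω j)))).map
        (fun j => V ω j - (F (pref (V ω) j)).toReal)).length := by
      rw [List.length_map]
      exact hi
    rw [List.getD_eq_getElem _ _ hlenmap, List.getElem_map]
    have hgete : ((List.finRange (2*n)).filter
        (fun j => decide (F (pref (V ω) j) ≤ ENNReal.ofReal (V ω j))))[i.val]'hi = I i ω := hget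
    rw [hgete, hFpref ω (I i ω), hY i ω]
  have hYmeas : ∀ i : Fin n, Measurable (Y i) := by
    intro i
    have heq : Y i = (fun v => (resids F (List.ofFn v)).getD i.val 0) ∘ V := by
      funext ω
      exact (hbridge ω i).symm
    rw [heq]
    have h := measurable_resids_getD (2*n) (α := Unit) (fun _ => F)
      (fun j => (hFmeas j).comp measurable_snd) i.val
    exact (h.comp ((measurable_const : Measurable fun _ : Fin (2*n) → ℝ => ()).prodMk
      measurable_id)).comp hVmeas
  have hmain : ∀ (s : Finset (Fin n)) (B : Fin n → Set ℝ), (∀ i, MeasurableSet (B i)) →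
      μ (⋂ i ∈ s, Y i ⁻¹' B i) = ∏ i ∈ s, expM (B i) := by
    intro s B hB
    set B' : ℕ → Set ℝ := fun m =>
      if h : m < n then (if (⟨m, h⟩ : Fin n) ∈ s then B ⟨m, h⟩ else Set.univ)
      else Set.univ with hB'def
    have hB'm : ∀ m, MeasurableSet (B' m) := by
      intro m
      simp only [hB'def]
      split_ifs
      exacts [hB _, MeasurableSet.univ, MeasurableSet.univ]
    have hpre : (⋂ i ∈ s, Y i ⁻¹' B i) = V ⁻¹' (keySet (2*n) n F B') := by
      ext ω
      simp only [Set.mem_iInter, Set.mem_preimage, keySet, Set.mem_setOf_eq]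
      constructor
      · intro h m hm
        simp only [hB'def]
        rw [dif_pos hm]
        by_cases hms : (⟨m, hm⟩ : Fin n) ∈ s
        · rw [if_pos hms]
          have h2 := h ⟨m, hm⟩ hms
          have h3 := hbridge ω ⟨m, hm⟩
          rw [show ((⟨m, hm⟩ : Fin n)).val = m from rfl] at h3
          rw [h3]
          exact h2
        · rw [if_neg hms]
          trivial
      · intro h i his
        have h2 := h i.val i.isLt
        simp only [hB'def] at h2
        rw [dif_pos i.isLt, Fin.eta, if_pos his] at h2
        rw [← hbridge ω i]
        exact h2
    rw [hpre, ← Measure.map_apply hVmeas (keySet_measurable _ _ _ _ hFmeas hB'm), hmap,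
      keySet_key (2*n) n (by omega) F hFmeas hF0 B' hB'm]
    rw [← Fin.prod_univ_eq_prod_range (fun m => expM (B' m)) n]
    have hfac : ∀ i : Fin n, expM (B' i.val)
        = if i ∈ s then expM (B i) else 1 := by
      intro i
      simp only [hB'def]
      rw [dif_pos i.isLt, Fin.eta]
      by_cases his : i ∈ s
      · rw [if_pos his, if_pos his]
      · rw [if_neg his, if_neg his, measure_univ]
    rw [Finset.prod_congr rfl (fun i _ => hfac i), Finset.prod_ite_mem, Finset.univ_inter]
  have hlaw : ∀ i, μ.map (Y i) = expMeasure 1 := by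
    intro i
    apply Measure.ext
    intro S hS
    rw [Measure.map_apply (hYmeas i) hS]
    have := hmain {i} (fun _ => S) (fun _ => hS)
    simpa using this
  have hYindep : iIndepFun Y μ := by
    rw [iIndepFun_iff_measure_inter_preimage_eq_mul]
    intro s sets hsets
    set B : Fin n → Set ℝ := fun i => if i ∈ s then sets i else Set.univ with hBdef
    have hBm : ∀ i, MeasurableSet (B i) := by
      intro i
      simp only [hBdef]
      split_ifs with h
      exacts [hsets i h, MeasurableSet.univ]
    have h1 : (⋂ i ∈ s, Y i ⁻¹' sets i) = ⋂ i ∈ s, Y i ⁻¹' B i := by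
      apply Set.iInter₂_congr
      intro i hi
      simp only [hBdef]
      rw [if_pos hi]
    rw [h1, hmain s B hBm]
    apply Finset.prod_congr rfl
    intro i hi
    rw [← Measure.map_apply (hYmeas i) (hsets i hi), hlaw i]
    simp only [hBdef]
    rw [if_pos hi]
  have hev : ∀ i : Fin n, {ω | excellentIdx X f p ω (I i ω)} = Y i ⁻¹' (Set.Ioi p) := by
    intro i
    ext ω
    simp only [Set.mem_setOf_eq, Set.mem_preimage, Set.mem_Ioi]
    unfold excellentIdx
    have hgood : f (I i ω) (fun q => X ⟨q.val, q.isLt.trans (I i ω).isLt⟩ ω)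
        ≤ ENNReal.ofReal (X (I i ω) ω) := hIgood ω i
    set c := f (I i ω) (fun q => X ⟨q.val, q.isLt.trans (I i ω).isLt⟩ ω) with hcdef
    have hctop : c ≠ ∞ := by
      intro h
      rw [h] at hgood
      exact ENNReal.ofReal_ne_top (top_le_iff.mp hgood)
    have hYval : Y i ω = X (I i ω) ω - c.toReal := hY i ω
    rw [hYval]
    by_cases hx : 0 ≤ X (I i ω) ω
    · have hc_of : c = ENNReal.ofReal c.toReal := (ENNReal.ofReal_toReal hctop).symm
      constructor
      · intro h
        rw [hc_of, ← ENNReal.ofReal_add ENNReal.toReal_nonneg hp] at h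
        have := (ENNReal.ofReal_lt_ofReal_iff_of_nonneg (by positivity)).mp h
        linarith
      · intro h
        rw [hc_of, ← ENNReal.ofReal_add ENNReal.toReal_nonneg hp]
        exact (ENNReal.ofReal_lt_ofReal_iff_of_nonneg (by positivity)).mpr (by linarith)
    · push_neg at hx
      have h0 : ENNReal.ofReal (X (I i ω) ω) = 0 := ENNReal.ofReal_eq_zero.mpr hx.le
      have hc0 : c = 0 := le_antisymm (h0 ▸ hgood) zero_le
      constructor
      · intro h
        exfalso
        rw [h0] at h
        exact (not_lt.mpr zero_le) h
      · intro h
        exfalso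
        rw [hc0, ENNReal.toReal_zero] at h
        linarith
  refine ⟨⟨hYindep, hlaw⟩, ?_, ?_⟩
  · rw [iIndepSet_iff_meas_biInter (fun i => (hev i) ▸ (hYmeas i) measurableSet_Ioi)]
    intro s
    have h1 : (⋂ i ∈ s, {ω | excellentIdx X f p ω (I i ω)}) = ⋂ i ∈ s, Y i ⁻¹' Set.Ioi p := by
      apply Set.iInter₂_congr
      intro i hi
      rw [hev i]
    rw [h1, hmain s (fun _ => Set.Ioi p) (fun _ => measurableSet_Ioi)]
    apply Finset.prod_congr rfl
    intro i hi
    rw [hev i, ← Measure.map_apply (hYmeas i) measurableSet_Ioi, hlaw i]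
  · intro i
    rw [hev i, ← Measure.map_apply (hYmeas i) measurableSet_Ioi, hlaw i]
    exact expM_Ioi hp
end

section
/- For every apex graph K there exists an apex graph K′ such that the following holds: if G is a K-minor-free graph and G′ is created from G by adding, for every nonempty clique A in G, a new vertex v_A whose neighborhood in G′ is exactly A, then G′ is K′-minor-free. -/
open SimpleGraph
open scoped ENNReal Classical

universe u

/-- `K` is a minor of `G`: there is a minor model assigning to every vertex of `K`
a nonempty connected branch set in `G`, the branch sets being pairwise disjoint,
with every edge of `K` realized by an edge of `G` between the two branch sets. -/
def SimpleGraph.IsMinorOf {W : Type*} {V : Type*} (K : SimpleGraph W) (G : SimpleGraph V) : Prop :=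
  ∃ φ : W → Set V,
    (∀ w, (φ w).Nonempty) ∧
    (∀ w, ((G.induce (φ w)).Connected)) ∧
    (Pairwise fun w w' => Disjoint (φ w) (φ w')) ∧
    ∀ w w', K.Adj w w' → ∃ u ∈ φ w, ∃ v ∈ φ w', G.Adj u v

/-- A graph is planar iff it has neither `K₅` nor `K₃,₃` as a minor
(Wagner's characterization of planarity). -/
def SimpleGraph.IsPlanar {V : Type*} (G : SimpleGraph V) : Prop :=
  ¬ (completeGraph (Fin 5)).IsMinorOf G ∧
    ¬ (completeBipartiteGraph (Fin 3) (Fin 3)).IsMinorOf G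

/-- An apex graph: a graph having a vertex whose removal leaves a planar graph. -/
def SimpleGraph.IsApex {W : Type*} (K : SimpleGraph W) : Prop :=
  ∃ u : W, (K.induce {v : W | v ≠ u}).IsPlanar

/-- `(T, bag)` is a tree decomposition of `G`: `T` is a tree, every vertex of `G` is in
some bag, both endpoints of every edge of `G` appear together in some bag, and for every
vertex of `G` the set of nodes whose bags contain it induces a connected subtree. -/
structure SimpleGraph.IsTreeDecomp {V : Type u} {ι : Type u} (G : SimpleGraph V)
    (T : SimpleGraph ι) (bag : ι → Set V) : Prop where
  isTree : T.IsTree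
  covers : ∀ v : V, ∃ i, v ∈ bag i
  covers_edge : ∀ u v : V, G.Adj u v → ∃ i, u ∈ bag i ∧ v ∈ bag i
  bag_connected : ∀ v : V, (T.induce {i | v ∈ bag i}).Connected

/-- The treewidth of `G` is at most `w`: there is a tree decomposition of `G` all of whose
bags have size at most `w + 1`. -/
def SimpleGraph.TreewidthLE {V : Type u} (G : SimpleGraph V) (w : ℝ) : Prop :=
  ∃ (ι : Type u) (T : SimpleGraph ι) (bag : ι → Set V),
    G.IsTreeDecomp T bag ∧ ∀ i, (bag i).Finite ∧ ((bag i).ncard : ℝ) ≤ w + 1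

/-- The graph obtained from `G` by adding, for every nonempty clique `A` of `G`, a new
vertex `v_A` whose neighborhood is exactly `A`. -/
def cliqueExtensionGraph {V : Type u} (G : SimpleGraph V) :
    SimpleGraph (V ⊕ {A : Set V // A.Nonempty ∧ G.IsClique A}) where
  Adj x y :=
    match x, y with
    | .inl u, .inl v => G.Adj u v
    | .inl u, .inr A => u ∈ A.1
    | .inr A, .inl v => v ∈ A.1
    | .inr _, .inr _ => False
  symm := ⟨by
    rintro (u | A) (v | B) h
    · exact h.symm
    · exact h
    · exact h
    · exact h.elim⟩
  loopless := ⟨by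
    rintro (u | A) h
    · exact G.irrefl h
    · exact h.elim⟩


/-! ### Auxiliary machinery -/

section MinorAux

variable {Vx Vy Wx Wy : Type*}

lemma minor_pattern {H : SimpleGraph Wx} {H' : SimpleGraph Wy} {X : SimpleGraph Vx}
    (g : Wy → Wx) (hg : Function.Injective g)
    (hadj : ∀ a b, H'.Adj a b → H.Adj (g a) (g b))
    (h : H.IsMinorOf X) : H'.IsMinorOf X := by
  obtain ⟨φ, h1, h2, h3, h4⟩ := h
  exact ⟨fun w => φ (g w), fun w => h1 _, fun w => h2 _,
    fun a b hab => h3 (hg.ne hab), fun a b hab => h4 _ _ (hadj a b hab)⟩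

lemma conn_of_surj {X : SimpleGraph Vx} {X' : SimpleGraph Vy} (f : Vx → Vy)
    (hadj : ∀ a b, X.Adj a b → X'.Adj (f a) (f b)) (hsurj : Function.Surjective f)
    (h : X.Connected) : X'.Connected :=
  SimpleGraph.Connected.map ⟨f, fun hab => hadj _ _ hab⟩ hsurj h

lemma minor_embed {H : SimpleGraph Wx} {X : SimpleGraph Vx} {X' : SimpleGraph Vy}
    (f : Vx → Vy) (hf : Function.Injective f)
    (hadj : ∀ a b, X.Adj a b ↔ X'.Adj (f a) (f b))
    (h : H.IsMinorOf X) : H.IsMinorOf X' := by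
  obtain ⟨φ, h1, h2, h3, h4⟩ := h
  refine ⟨fun w => f '' φ w, fun w => (h1 w).image f, fun w => ?_, ?_, ?_⟩
  · refine conn_of_surj (fun x => ⟨f x.1, ⟨x.1, x.2, rfl⟩⟩) ?_ ?_ (h2 w)
    · intro a b hab
      exact (hadj a.1 b.1).1 hab
    · rintro ⟨y, x, hx, rfl⟩
      exact ⟨⟨x, hx⟩, rfl⟩
  · intro a b hab
    exact (Set.disjoint_image_iff hf).2 (h3 hab)
  · intro a b hab
    obtain ⟨u, hu, v, hv, huv⟩ := h4 a b hab
    exact ⟨f u, ⟨u, hu, rfl⟩, f v, ⟨v, hv, rfl⟩, (hadj u v).1 huv⟩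

lemma minor_embed_rev {H : SimpleGraph Wx} {X : SimpleGraph Vx} {X' : SimpleGraph Vy}
    (f : Vx → Vy) (hf : Function.Injective f)
    (hadj : ∀ a b, X.Adj a b ↔ X'.Adj (f a) (f b))
    (φ : Wx → Set Vy)
    (h1 : ∀ w, (φ w).Nonempty) (h2 : ∀ w, ((X'.induce (φ w)).Connected))
    (h3 : Pairwise fun w w' => Disjoint (φ w) (φ w'))
    (h4 : ∀ w w', H.Adj w w' → ∃ u ∈ φ w, ∃ v ∈ φ w', X'.Adj u v)
    (hrange : ∀ w, φ w ⊆ Set.range f) :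
    H.IsMinorOf X := by
  rcases isEmpty_or_nonempty Wx with hW | hW
  · exact ⟨fun w => isEmptyElim w, fun w => isEmptyElim w, fun w => isEmptyElim w,
      fun a b _ => isEmptyElim a, fun w => isEmptyElim w⟩
  · obtain ⟨w₀⟩ := hW
    obtain ⟨y₀, hy₀⟩ := h1 w₀
    obtain ⟨a₀, -⟩ := hrange w₀ hy₀
    have hV : Nonempty Vx := ⟨a₀⟩
    set g := Function.invFun f with hg
    have hgf : ∀ y ∈ Set.range f, f (g y) = y := fun y hy => Function.invFun_eq hy
    have hfg : ∀ a, g (f a) = a := fun a => Function.leftInverse_invFun hf a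
    refine ⟨fun w => f ⁻¹' φ w, ?_, ?_, ?_, ?_⟩
    · intro w
      obtain ⟨y, hy⟩ := h1 w
      obtain ⟨a, rfl⟩ := hrange w hy
      exact ⟨a, hy⟩
    · intro w
      refine conn_of_surj
        (fun x => (⟨g x.1, ?_⟩ : {a // a ∈ f ⁻¹' φ w})) ?_ ?_ (h2 w)
      · show f (g x.1) ∈ φ w
        rw [hgf x.1 (hrange w x.2)]
        exact x.2
      · intro a b hab
        show X.Adj (g a.1) (g b.1)
        rw [hadj, hgf a.1 (hrange w a.2), hgf b.1 (hrange w b.2)]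
        exact hab
      · rintro ⟨a, ha⟩
        exact ⟨⟨f a, ha⟩, Subtype.ext (hfg a)⟩
    · intro a b hab
      exact (h3 hab).preimage f
    · intro a b hab
      obtain ⟨u, hu, v, hv, huv⟩ := h4 a b hab
      obtain ⟨x, rfl⟩ := hrange a hu
      obtain ⟨y, rfl⟩ := hrange b hv
      exact ⟨x, hu, y, hv, (hadj x y).2 huv⟩

lemma adj_of_reachable_ne {Y : SimpleGraph Vx} :
    ∀ {x y : Vx}, Y.Reachable x y → x ≠ y → ∃ c, Y.Adj x c := by
  intro x y h hne
  obtain ⟨p⟩ := h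
  cases p with
  | nil => exact (hne rfl).elim
  | cons h q => exact ⟨_, h⟩

lemma singleton_of_indep {X : SimpleGraph Vx} {P : Set Vx}
    (hind : ∀ v ∈ P, ∀ u ∈ P, ¬ X.Adj v u) {s : Set Vx}
    (hconn : (X.induce s).Connected) (hsub : s ⊆ P) : ∃ v, s = {v} := by
  obtain ⟨⟨v, hv⟩⟩ := hconn.nonempty
  refine ⟨v, Set.eq_singleton_iff_unique_mem.2 ⟨hv, ?_⟩⟩
  intro b hb
  by_contra hne
  obtain ⟨c, hc⟩ := adj_of_reachable_ne
    (hconn.preconnected ⟨b, hb⟩ ⟨v, hv⟩) (fun h => hne (congrArg Subtype.val h))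
  exact hind b (hsub hb) c.1 (hsub c.2) hc

lemma reach_avoid {X : SimpleGraph Vx} {P : Set Vx}
    (hclq : ∀ v ∈ P, X.IsClique (X.neighborSet v))
    (hind : ∀ v ∈ P, ∀ u ∈ P, ¬ X.Adj v u) :
    ∀ (n : ℕ) (a b : Vx) (p : X.Walk a b), p.length ≤ n → ∀ (ha : a ∉ P) (hb : b ∉ P),
      (X.induce {v | v ∉ P}).Reachable ⟨a, ha⟩ ⟨b, hb⟩ := by
  intro n
  induction n with
  | zero =>
    intro a b p hp ha hb
    cases p with
    | nil => exact Reachable.refl _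
    | cons h q => simp at hp
  | succ n ih =>
    intro a b p hp ha hb
    cases p with
    | nil => exact Reachable.refl _
    | @cons _ c _ h q =>
      by_cases hc : c ∈ P
      · cases q with
        | nil => exact absurd hc hb
        | @cons _ d _ h' r =>
          have hd : d ∉ P := fun hd => hind c hc d hd h'
          have hlen : r.length ≤ n := by
            simp only [Walk.length_cons] at hp; omega
          by_cases had : a = d
          · subst had
            exact ih a b r hlen ha hb
          · have hadj : X.Adj a d :=
              hclq c hc (by exact h.symm) (by exact h') had
            refine Reachable.trans ?_ (ih d b r hlen hd hb)
            exact Adj.reachable (by exact hadj)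
      · have hlen : q.length ≤ n := by
          simp only [Walk.length_cons] at hp; omega
        refine Reachable.trans ?_ (ih c b q hlen hc hb)
        exact Adj.reachable (by exact h)

lemma connected_induce_diff {X : SimpleGraph Vx} {P : Set Vx}
    (hclq : ∀ v ∈ P, X.IsClique (X.neighborSet v))
    (hind : ∀ v ∈ P, ∀ u ∈ P, ¬ X.Adj v u) {s : Set Vx}
    (hconn : (X.induce s).Connected) (hne : (s \ P).Nonempty) :
    (X.induce (s \ P)).Connected := by
  classical
  have hclq' : ∀ v ∈ {x : s | x.1 ∈ P}, (X.induce s).IsClique ((X.induce s).neighborSet v) := by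
    intro v hv x hx y hy hxy
    have : X.Adj x.1 y.1 := hclq v.1 hv (by exact hx) (by exact hy)
      (fun h => hxy (Subtype.ext h))
    exact this
  have hind' : ∀ v ∈ {x : s | x.1 ∈ P}, ∀ u ∈ {x : s | x.1 ∈ P}, ¬ (X.induce s).Adj v u := by
    intro v hv u hu h
    exact hind v.1 hv u.1 hu h
  have hmain : ((X.induce s).induce {x | x ∉ {x : s | x.1 ∈ P}}).Connected := by
    rw [connected_iff]
    constructor
    · intro x y
      obtain ⟨p⟩ := hconn.preconnected ⟨x.1.1, x.1.2⟩ ⟨y.1.1, y.1.2⟩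
      have := reach_avoid hclq' hind' p.length _ _ p le_rfl x.2 y.2
      simpa using this
    · exact ⟨⟨⟨hne.choose, hne.choose_spec.1⟩, hne.choose_spec.2⟩⟩
  refine conn_of_surj (fun x => ⟨x.1.1, x.1.2, x.2⟩) ?_ ?_ hmain
  · intro a b hab
    exact hab
  · rintro ⟨v, hv1, hv2⟩
    exact ⟨⟨⟨v, hv1⟩, hv2⟩, rfl⟩

lemma trim_model {H : SimpleGraph Wx} {X : SimpleGraph Vx} {P : Set Vx}
    (hclq : ∀ v ∈ P, X.IsClique (X.neighborSet v))
    (hind : ∀ v ∈ P, ∀ u ∈ P, ¬ X.Adj v u)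
    (φ : Wx → Set Vx)
    (h1 : ∀ w, (φ w).Nonempty) (h2 : ∀ w, ((X.induce (φ w)).Connected))
    (h3 : Pairwise fun w w' => Disjoint (φ w) (φ w'))
    (h4 : ∀ w w', H.Adj w w' → ∃ u ∈ φ w, ∃ v ∈ φ w', X.Adj u v)
    (hns : ∀ w, (φ w \ P).Nonempty) :
    ∃ φ' : Wx → Set Vx,
      (∀ w, (φ' w).Nonempty) ∧ (∀ w, ((X.induce (φ' w)).Connected)) ∧
      (Pairwise fun w w' => Disjoint (φ' w) (φ' w')) ∧
      (∀ w w', H.Adj w w' → ∃ u ∈ φ' w, ∃ v ∈ φ' w', X.Adj u v) ∧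
      ∀ w, Disjoint (φ' w) P := by
  have fix : ∀ w u v, u ∈ φ w → u ∈ P → X.Adj u v → v ∉ φ w →
      ∃ c ∈ φ w \ P, X.Adj c v := by
    intro w u v hu huP huv hvw
    obtain ⟨t, ht, htP⟩ := hns w
    have hut : u ≠ t := fun h => htP (h ▸ huP)
    obtain ⟨c, hc⟩ := adj_of_reachable_ne
      ((h2 w).preconnected ⟨u, hu⟩ ⟨t, ht⟩) (fun h => hut (congrArg Subtype.val h))
    have hcX : X.Adj u c.1 := hc
    have hcP : c.1 ∉ P := fun hcP => hind u huP c.1 hcP hcX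
    have hcv : c.1 ≠ v := fun h => hvw (h ▸ c.2)
    exact ⟨c.1, ⟨c.2, hcP⟩, hclq u huP (by exact hcX) (by exact huv) hcv⟩
  refine ⟨fun w => φ w \ P, hns, fun w => connected_induce_diff hclq hind (h2 w) (hns w),
    fun a b hab => ((h3 hab).mono (Set.diff_subset) (Set.diff_subset)), ?_,
    fun w => Set.disjoint_sdiff_left⟩
  intro a b hab
  obtain ⟨u, hu, v, hv, huv⟩ := h4 a b hab
  have hab' : a ≠ b := hab.ne
  have hdisj := h3 hab'
  by_cases huP : u ∈ P
  · have hvP : v ∉ P := fun hvP => hind u huP v hvP huv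
    have hvφa : v ∉ φ a := fun h => (hdisj.ne_of_mem h hv) rfl
    obtain ⟨c, hc, hcv⟩ := fix a u v hu huP huv hvφa
    exact ⟨c, hc, v, ⟨hv, hvP⟩, hcv⟩
  · by_cases hvP : v ∈ P
    · have huφb : u ∉ φ b := fun h => (hdisj.ne_of_mem hu h) rfl
      obtain ⟨c, hc, hcu⟩ := fix b v u hv hvP huv.symm huφb
      exact ⟨u, ⟨hu, huP⟩, c, hc, hcu.symm⟩
    · exact ⟨u, ⟨hu, huP⟩, v, ⟨hv, hvP⟩, huv⟩

lemma exists_model_avoiding {X : SimpleGraph Vx} {P : Set Vx}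
    (hclq : ∀ v ∈ P, X.IsClique (X.neighborSet v))
    (hind : ∀ v ∈ P, ∀ u ∈ P, ¬ X.Adj v u)
    (hdegP : ∀ v ∈ P, ∀ x y, X.Adj v x → X.Adj v y → x = y)
    {Wj : Type*} {J : SimpleGraph Wj}
    (hdeg : ∀ w, ∃ w₁ w₂, w₁ ≠ w₂ ∧ J.Adj w w₁ ∧ J.Adj w w₂)
    (h : J.IsMinorOf X) :
    ∃ φ' : Wj → Set Vx,
      (∀ w, (φ' w).Nonempty) ∧ (∀ w, ((X.induce (φ' w)).Connected)) ∧
      (Pairwise fun w w' => Disjoint (φ' w) (φ' w')) ∧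
      (∀ w w', J.Adj w w' → ∃ u ∈ φ' w, ∃ v ∈ φ' w', X.Adj u v) ∧
      ∀ w, Disjoint (φ' w) P := by
  obtain ⟨φ, h1, h2, h3, h4⟩ := h
  have hns : ∀ w, (φ w \ P).Nonempty := by
    intro w
    rw [Set.diff_nonempty]
    intro hsub
    obtain ⟨z, hz⟩ := singleton_of_indep hind (h2 w) hsub
    have hzP : z ∈ P := hsub (hz ▸ Set.mem_singleton z)
    obtain ⟨w₁, w₂, hww, ha1, ha2⟩ := hdeg w
    obtain ⟨u₁, hu₁, v₁, hv₁, huv₁⟩ := h4 w w₁ ha1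
    obtain ⟨u₂, hu₂, v₂, hv₂, huv₂⟩ := h4 w w₂ ha2
    rw [hz, Set.mem_singleton_iff] at hu₁ hu₂
    rw [hu₁] at huv₁
    rw [hu₂] at huv₂
    have : v₁ = v₂ := hdegP z hzP v₁ v₂ huv₁ huv₂
    exact (h3 hww).ne_of_mem hv₁ (this ▸ hv₂) rfl
  exact trim_model hclq hind φ h1 h2 h3 h4 hns

end MinorAux

/-- The pendant extension of `K`: every vertex of `K` receives a pendant neighbour. -/
def pendantExt {W : Type*} (K : SimpleGraph W) : SimpleGraph (W ⊕ W) where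
  Adj x y :=
    match x, y with
    | .inl a, .inl b => K.Adj a b
    | .inl a, .inr b => a = b
    | .inr a, .inl b => b = a
    | .inr _, .inr _ => False
  symm := ⟨by
    rintro (a | a) (b | b) h
    · exact h.symm
    · exact h
    · exact h
    · exact h.elim⟩
  loopless := ⟨by
    rintro (a | a) h
    · exact K.irrefl h
    · exact h.elim⟩

lemma pendant_planar_aux {W : Type*} (K : SimpleGraph W) {Wj : Type*} (J : SimpleGraph Wj)
    (hdeg : ∀ w, ∃ w₁ w₂, w₁ ≠ w₂ ∧ J.Adj w w₁ ∧ J.Adj w w₂)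
    (u : W) (hfree : ¬ J.IsMinorOf (K.induce {v : W | v ≠ u})) :
    ¬ J.IsMinorOf ((pendantExt K).induce {v : W ⊕ W | v ≠ Sum.inl u}) := by
  intro h
  have nbr : ∀ (y : W) (hy : (Sum.inr y : W ⊕ W) ∈ {v : W ⊕ W | v ≠ Sum.inl u})
      (x : {v : W ⊕ W // v ≠ Sum.inl u}),
      ((pendantExt K).induce {v : W ⊕ W | v ≠ Sum.inl u}).Adj ⟨Sum.inr y, hy⟩ x →
        x.1 = Sum.inl y := by
    rintro y hy ⟨(c | c), hc⟩ hx
    · exact congrArg Sum.inl (by exact hx : c = y)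
    · exact absurd hx (by exact id)
  have hclq : ∀ v ∈ {z : {v : W ⊕ W // v ≠ Sum.inl u} | ∃ y, z.1 = Sum.inr y},
      ((pendantExt K).induce {v : W ⊕ W | v ≠ Sum.inl u}).IsClique
        (((pendantExt K).induce {v : W ⊕ W | v ≠ Sum.inl u}).neighborSet v) := by
    rintro ⟨z, hz⟩ ⟨y, hy⟩ x hx x' hx' hxx'
    dsimp only at hy
    subst hy
    exact absurd (((nbr y hz x hx).trans (nbr y hz x' hx').symm))
      (fun h => hxx' (Subtype.ext h))
  have hind : ∀ v ∈ {z : {v : W ⊕ W // v ≠ Sum.inl u} | ∃ y, z.1 = Sum.inr y},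
      ∀ u' ∈ {z : {v : W ⊕ W // v ≠ Sum.inl u} | ∃ y, z.1 = Sum.inr y},
      ¬ ((pendantExt K).induce {v : W ⊕ W | v ≠ Sum.inl u}).Adj v u' := by
    rintro ⟨z, hz⟩ ⟨y, hy⟩ ⟨z', hz'⟩ ⟨y', hy'⟩ hadj
    dsimp only at hy hy'
    subst hy; subst hy'
    exact hadj
  have hdegP : ∀ v ∈ {z : {v : W ⊕ W // v ≠ Sum.inl u} | ∃ y, z.1 = Sum.inr y},
      ∀ x y, ((pendantExt K).induce {v : W ⊕ W | v ≠ Sum.inl u}).Adj v x →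
        ((pendantExt K).induce {v : W ⊕ W | v ≠ Sum.inl u}).Adj v y → x = y := by
    rintro ⟨z, hz⟩ ⟨y, hy⟩ x x' hx hx'
    dsimp only at hy
    subst hy
    exact Subtype.ext ((nbr y hz x hx).trans (nbr y hz x' hx').symm)
  obtain ⟨φ', g1, g2, g3, g4, g5⟩ := exists_model_avoiding hclq hind hdegP hdeg h
  apply hfree
  refine minor_embed_rev
    (fun y => (⟨Sum.inl y.1, fun h => y.2 (Sum.inl.inj (by exact h))⟩ :
      {v : W ⊕ W // v ≠ Sum.inl u})) ?_ ?_ φ' g1 g2 g3 g4 ?_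
  · intro a b hab
    exact Subtype.ext (Sum.inl.inj (Subtype.ext_iff.mp hab))
  · intro a b
    exact Iff.rfl
  · rintro w ⟨(c | c), hc⟩ hz
    · exact ⟨⟨c, fun h => hc (congrArg Sum.inl h)⟩, rfl⟩
    · exact absurd ⟨c, rfl⟩ (Set.disjoint_left.mp (g5 w) hz)

lemma main_aux {W V : Type*} (K : SimpleGraph W) (G : SimpleGraph V)
    (hfree : ¬ K.IsMinorOf G) :
    ¬ (pendantExt K).IsMinorOf (cliqueExtensionGraph G) := by
  rintro ⟨φ, h1, h2, h3, h4⟩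
  classical
  have hind : ∀ v ∈ (Set.range Sum.inr : Set (V ⊕ _)), ∀ u ∈ Set.range Sum.inr,
      ¬ (cliqueExtensionGraph G).Adj v u := by
    rintro _ ⟨A, rfl⟩ _ ⟨B, rfl⟩ hadj
    exact hadj
  have hclq : ∀ v ∈ (Set.range Sum.inr : Set (V ⊕ _)),
      (cliqueExtensionGraph G).IsClique ((cliqueExtensionGraph G).neighborSet v) := by
    rintro _ ⟨A, rfl⟩ x hx y hy hxy
    match x, y, hx, hy with
    | Sum.inl a, Sum.inl b, hx, hy =>
      exact A.2.2 (by exact hx) (by exact hy) (fun h => hxy (congrArg Sum.inl h))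
    | Sum.inl a, Sum.inr B, hx, hy => exact hy.elim
    | Sum.inr B, _, hx, hy => exact hx.elim
  have hS : ∀ w, φ w ⊆ Set.range Sum.inr → ∃ A, φ w = {Sum.inr A} := by
    intro w hw
    obtain ⟨z, hz⟩ := singleton_of_indep hind (h2 w) hw
    have hzr : z ∈ Set.range Sum.inr := hw (hz ▸ Set.mem_singleton z)
    obtain ⟨A, rfl⟩ := hzr
    exact ⟨A, hz⟩
  have hreal : ∀ (w w' : W ⊕ W) A, φ w = {Sum.inr A} → (pendantExt K).Adj w w' →
      ∃ a ∈ A.1, Sum.inl a ∈ φ w' := by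
    intro w w' A hA hadj
    obtain ⟨u', hu', v', hv', huv⟩ := h4 w w' hadj
    rw [hA, Set.mem_singleton_iff] at hu'
    rw [hu'] at huv
    match v', hv', huv with
    | Sum.inl a, hv', huv => exact ⟨a, huv, hv'⟩
    | Sum.inr B, hv', huv => exact huv.elim
  have hnotboth : ∀ x y, K.Adj x y → φ (Sum.inl x) ⊆ Set.range Sum.inr →
      φ (Sum.inl y) ⊆ Set.range Sum.inr → False := by
    intro x y hxy hx hy
    obtain ⟨A, hA⟩ := hS _ hx
    obtain ⟨B, hB⟩ := hS _ hy
    obtain ⟨a, haA, hay⟩ := hreal _ _ A hA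
      (show (pendantExt K).Adj (Sum.inl x) (Sum.inl y) from hxy)
    obtain ⟨C, hC⟩ := hy hay
    exact (by simp at hC : False)
  set rep : W → W ⊕ W := fun x =>
    if φ (Sum.inl x) ⊆ Set.range Sum.inr then Sum.inr x else Sum.inl x with hrep
  have hrepcases : ∀ x, (φ (Sum.inl x) ⊆ Set.range Sum.inr ∧ rep x = Sum.inr x) ∨
      (¬ (φ (Sum.inl x) ⊆ Set.range Sum.inr) ∧ rep x = Sum.inl x) := by
    intro x
    by_cases hx : φ (Sum.inl x) ⊆ Set.range Sum.inr
    · exact Or.inl ⟨hx, by simp [hrep, hx]⟩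
    · exact Or.inr ⟨hx, by simp [hrep, hx]⟩
  have hrepinj : Function.Injective rep := by
    intro x y hxy
    rcases hrepcases x with ⟨-, ex⟩ | ⟨-, ex⟩ <;> rcases hrepcases y with ⟨-, ey⟩ | ⟨-, ey⟩ <;>
      rw [ex, ey] at hxy <;> first
      | exact Sum.inr.inj hxy
      | exact Sum.inl.inj hxy
      | exact absurd hxy (by simp)
  have hmix : ∀ x y, K.Adj x y → φ (Sum.inl x) ⊆ Set.range Sum.inr →
      ∃ u ∈ φ (Sum.inr x), ∃ v ∈ φ (Sum.inl y), (cliqueExtensionGraph G).Adj u v := by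
    intro x y hxy hx
    obtain ⟨A, hA⟩ := hS _ hx
    obtain ⟨a, haA, hay⟩ := hreal _ _ A hA
      (show (pendantExt K).Adj (Sum.inl x) (Sum.inl y) from hxy)
    obtain ⟨a', ha'A, ha'x⟩ := hreal _ _ A hA
      (show (pendantExt K).Adj (Sum.inl x) (Sum.inr x) from rfl)
    have hne : a' ≠ a := by
      intro hc
      rw [hc] at ha'x
      exact (h3 (show (Sum.inr x : W ⊕ W) ≠ Sum.inl y by simp)).ne_of_mem ha'x hay rfl
    exact ⟨Sum.inl a', ha'x, Sum.inl a, hay, by exact A.2.2 ha'A haA hne⟩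
  have hψ3 : Pairwise fun x y => Disjoint (φ (rep x)) (φ (rep y)) :=
    fun x y hxy => h3 (hrepinj.ne hxy)
  have hψ4 : ∀ x y, K.Adj x y →
      ∃ u ∈ φ (rep x), ∃ v ∈ φ (rep y), (cliqueExtensionGraph G).Adj u v := by
    intro x y hxy
    rcases hrepcases x with ⟨hx, ex⟩ | ⟨hx, ex⟩ <;> rcases hrepcases y with ⟨hy, ey⟩ | ⟨hy, ey⟩ <;>
      rw [ex, ey]
    · exact (hnotboth x y hxy hx hy).elim
    · exact hmix x y hxy hx
    · obtain ⟨u', hu', v', hv', huv⟩ := hmix y x hxy.symm hy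
      exact ⟨v', hv', u', hu', huv.symm⟩
    · exact h4 _ _ (show (pendantExt K).Adj (Sum.inl x) (Sum.inl y) from hxy)
  have hψns : ∀ x, (φ (rep x) \ Set.range Sum.inr).Nonempty := by
    intro x
    rw [Set.diff_nonempty]
    intro hsub
    rcases hrepcases x with ⟨hx, ex⟩ | ⟨hx, ex⟩
    · rw [ex] at hsub
      obtain ⟨A, hA⟩ := hS _ hx
      obtain ⟨a, haA, hax⟩ :=
        hreal _ _ A hA (show (pendantExt K).Adj (Sum.inl x) (Sum.inr x) from rfl)
      obtain ⟨B, hB⟩ := hsub hax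
      exact (by simp at hB : False)
    · rw [ex] at hsub
      exact hx hsub
  obtain ⟨ψ', g1, g2, g3, g4, g5⟩ := trim_model hclq hind (fun x => φ (rep x))
    (fun x => h1 _) (fun x => h2 _) hψ3 hψ4 hψns
  apply hfree
  refine minor_embed_rev (Sum.inl : V → V ⊕ _) Sum.inl_injective
    (fun a b => Iff.rfl) ψ' g1 g2 g3 g4 ?_
  intro x z hz
  match z, hz with
  | Sum.inl a, hz => exact ⟨a, rfl⟩
  | Sum.inr B, hz => exact absurd ⟨B, rfl⟩ (Set.disjoint_left.mp (g5 x) hz)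

instance : DecidableRel (completeGraph (Fin 5)).Adj :=
  fun a b => inferInstanceAs (Decidable (a ≠ b))
instance : DecidableRel (completeBipartiteGraph (Fin 3) (Fin 3)).Adj :=
  fun a b => inferInstanceAs (Decidable (_ ∨ _))

lemma deg5 : ∀ w : Fin 5, ∃ w₁ w₂, w₁ ≠ w₂ ∧
    (completeGraph (Fin 5)).Adj w w₁ ∧ (completeGraph (Fin 5)).Adj w w₂ := by decide

lemma deg33 : ∀ w, ∃ w₁ w₂, w₁ ≠ w₂ ∧
    (completeBipartiteGraph (Fin 3) (Fin 3)).Adj w w₁ ∧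
    (completeBipartiteGraph (Fin 3) (Fin 3)).Adj w w₂ := by decide

/-- For every apex graph `K` there is an apex graph `K'` such that: if `G` is
`K`-minor-free and `G'` is obtained from `G` by adding, for every nonempty clique `A` of
`G`, a new vertex whose neighborhood is exactly `A`, then `G'` is `K'`-minor-free. -/
theorem clique_extension_minor_free
    {W : Type} [Fintype W] (K : SimpleGraph W) (hK : K.IsApex) :
    ∃ (m : ℕ) (K' : SimpleGraph (Fin m)), K'.IsApex ∧
      ∀ (V : Type) [Fintype V] (G : SimpleGraph V),
        ¬ K.IsMinorOf G → ¬ K'.IsMinorOf (cliqueExtensionGraph G) := by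
  classical
  obtain ⟨u, hp5, hp33⟩ := hK
  set e := Fintype.equivFin (W ⊕ W) with he
  refine ⟨Fintype.card (W ⊕ W), (pendantExt K).comap ⇑e.symm, ⟨e (Sum.inl u), ?_, ?_⟩, ?_⟩
  · intro h
    exact pendant_planar_aux K _ deg5 u hp5
      (minor_embed (fun x => (⟨e.symm x.1, fun hc => x.2 ((e.symm_apply_eq).mp hc)⟩ :
        {v : W ⊕ W // v ≠ Sum.inl u}))
        (fun a b hab => Subtype.ext (e.symm.injective (Subtype.ext_iff.mp hab)))
        (fun a b => Iff.rfl) h)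
  · intro h
    exact pendant_planar_aux K _ deg33 u hp33
      (minor_embed (fun x => (⟨e.symm x.1, fun hc => x.2 ((e.symm_apply_eq).mp hc)⟩ :
        {v : W ⊕ W // v ≠ Sum.inl u}))
        (fun a b hab => Subtype.ext (e.symm.injective (Subtype.ext_iff.mp hab)))
        (fun a b => Iff.rfl) h)
  · intro V _ G hGfree hmin
    exact main_aux K G hGfree
      (minor_pattern ⇑e e.injective (fun a b hab => by simpa using hab) hmin)
end
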